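/- arXiv:2507.07943 — 4 statements merged into one kernel-verified Lean document; each statement's English description precedes it below -/
import Mathlib

section
/- Let G=(V,A) be a finite directed graph, let k ≥ 1 be an integer, and let x : A → ℝ satisfy x_e ≥ 0 for every edge e and ∑_{e∈P} x_e ≥ 1 for every directed path P consisting of k edges. Then for every labeling ℓ : V → [0,1], every directed path with k edges contains at least one edge e=(u,v) with ℓ(v) − ℓ(u) ≤ (k+1)·x_e − 1. Consequently, deleting all edges e=(u,v) with ℓ(v) − ℓ(u) ≤ (k+1)·x_e − 1 leaves a graph with no directed path of k edges. -/
lemma tele_sum : ∀ (n : ℕ) (f : Fin (n + 1) → ℝ),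
    ∑ i : Fin n, (f i.succ - f i.castSucc) = f (Fin.last n) - f 0 := by
  intro n
  induction n with
  | zero => intro f; simp
  | succ n ih =>
    intro f
    rw [Fin.sum_univ_castSucc]
    have h1 : ∀ i : Fin n, (f (i.castSucc.succ) - f (i.castSucc.castSucc))
        = ((f ∘ Fin.castSucc) i.succ - (f ∘ Fin.castSucc) i.castSucc) := by
      intro i
      simp [-Fin.castSucc_succ, Fin.succ_castSucc]
    simp only [h1]
    rw [ih (f ∘ Fin.castSucc)]
    simp [Fin.succ_last]

/-- For a finite directed graph `(V, A)`, `k ≥ 1`, and a feasible LP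
solution `x` (nonnegative, and summing to at least `1` along every directed path with
`k` edges), every labeling `ℓ : V → [0,1]` has the property that each directed path with
`k` edges contains an edge `e = (u,v)` with `ℓ v - ℓ u ≤ (k+1)·x e - 1`; consequently,
after deleting all such edges no directed path with `k` edges remains. -/
theorem stmt_0 {V : Type*} [Fintype V] (A : Finset (V × V)) (k : ℕ) (hk : 1 ≤ k)
    (x : V × V → ℝ)
    (hx_nonneg : ∀ e ∈ A, 0 ≤ x e)
    (hx_path : ∀ p : Fin (k + 1) → V,
      (∀ i : Fin k, (p i.castSucc, p i.succ) ∈ A) →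
      1 ≤ ∑ i : Fin k, x (p i.castSucc, p i.succ))
    (ℓ : V → ℝ) (hℓ : ∀ v, ℓ v ∈ Set.Icc (0 : ℝ) 1) :
    (∀ p : Fin (k + 1) → V,
      (∀ i : Fin k, (p i.castSucc, p i.succ) ∈ A) →
      ∃ i : Fin k,
        ℓ (p i.succ) - ℓ (p i.castSucc) ≤ (k + 1) * x (p i.castSucc, p i.succ) - 1) ∧
    ¬ ∃ p : Fin (k + 1) → V, ∀ i : Fin k,
        (p i.castSucc, p i.succ) ∈ A ∧
        ¬ (ℓ (p i.succ) - ℓ (p i.castSucc) ≤ (k + 1) * x (p i.castSucc, p i.succ) - 1) := by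
  have key : ∀ p : Fin (k + 1) → V,
      (∀ i : Fin k, (p i.castSucc, p i.succ) ∈ A) →
      ∃ i : Fin k,
        ℓ (p i.succ) - ℓ (p i.castSucc) ≤ (k + 1) * x (p i.castSucc, p i.succ) - 1 := by
    intro p hp
    by_contra h
    push_neg at h
    have hne : (Finset.univ : Finset (Fin k)).Nonempty := by
      rw [Finset.univ_nonempty_iff]
      exact Fin.pos_iff_nonempty.mp (by omega)
    have hsum : ∑ i : Fin k, ((k + 1 : ℝ) * x (p i.castSucc, p i.succ) - 1)
        < ∑ i : Fin k, (ℓ (p i.succ) - ℓ (p i.castSucc)) :=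
      Finset.sum_lt_sum_of_nonempty hne (fun i _ => h i)
    rw [tele_sum k (fun i => ℓ (p i))] at hsum
    have hS := hx_path p hp
    have hlhs : (k : ℝ) + 1 - k ≤ ∑ i : Fin k, ((k + 1 : ℝ) * x (p i.castSucc, p i.succ) - 1) := by
      rw [Finset.sum_sub_distrib, ← Finset.mul_sum]
      simp only [Finset.sum_const, Finset.card_univ, Fintype.card_fin, nsmul_eq_mul, mul_one]
      have : (k : ℝ) + 1 ≤ (k + 1 : ℝ) * ∑ i : Fin k, x (p i.castSucc, p i.succ) := by
        nlinarith [hS]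
      linarith
    have h0 := hℓ (p 0)
    have h1 := hℓ (p (Fin.last k))
    simp only [Set.mem_Icc] at h0 h1
    have : (k : ℝ) + 1 - k = 1 := by ring
    linarith
  refine ⟨key, ?_⟩
  rintro ⟨p, hp⟩
  obtain ⟨i, hi⟩ := key p (fun i => (hp i).1)
  exact (hp i).2 hi
end

section
/- For every probability distribution D supported on [0,1], if X and Y are independent random variables each distributed according to D, then there exists t ∈ [-1,1] with Pr[X − Y ≤ t] > 0.539·(t + 1). Equivalently, no α ≤ 0.539 can satisfy Pr[X − Y ≤ t] ≤ α·(t+1) for all t ∈ [-1,1]. -/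
open MeasureTheory Real

noncomputable section
namespace Stmt10Aux

/-- The positive-definite test kernel. -/
def K (s : ℝ) : ℝ := 2 * Real.sqrt 3 * Real.cos (3*π/2*s) + Real.cos (3*π*s)

/-- minus the derivative of `K`. -/
def S (s : ℝ) : ℝ := 2 * Real.sqrt 3 * (3*π/2) * Real.sin (3*π/2*s) + 3*π*Real.sin (3*π*s)

/-- An antiderivative of `K`. -/
def M (s : ℝ) : ℝ := 4*Real.sqrt 3/(3*π) * Real.sin (3*π/2*s) + 1/(3*π) * Real.sin (3*π*s)

lemma contS : Continuous S := by unfold S; fun_prop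

lemma contK : Continuous K := by unfold K; fun_prop

lemma hKd (s : ℝ) : HasDerivAt K (-(S s)) s := by
  have h1 : HasDerivAt (fun s : ℝ => 3*π/2*s) (3*π/2) s := by
    simpa using (hasDerivAt_id s).const_mul (3*π/2)
  have h2 : HasDerivAt (fun s : ℝ => 3*π*s) (3*π) s := by
    simpa using (hasDerivAt_id s).const_mul (3*π)
  have := ((h1.cos.const_mul (2 * Real.sqrt 3)).add h2.cos)
  refine this.congr_deriv ?_
  unfold S; ring

lemma hMd (s : ℝ) : HasDerivAt M (K s) s := by
  have h1 : HasDerivAt (fun s : ℝ => 3*π/2*s) (3*π/2) s := by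
    simpa using (hasDerivAt_id s).const_mul (3*π/2)
  have h2 : HasDerivAt (fun s : ℝ => 3*π*s) (3*π) s := by
    simpa using (hasDerivAt_id s).const_mul (3*π)
  have := ((h1.sin.const_mul (4*Real.sqrt 3/(3*π))).add (h2.sin.const_mul (1/(3*π))))
  refine this.congr_deriv ?_
  have hπ : (π:ℝ) ≠ 0 := Real.pi_ne_zero
  unfold K; field_simp; ring

lemma hGd (A s : ℝ) :
    HasDerivAt (fun s => -((A + 1.078*s) * K s) + 1.078 * M s) (S s * (A + 1.078*s)) s := by
  have hlin : HasDerivAt (fun s : ℝ => A + 1.078*s) 1.078 s := by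
    simpa using ((hasDerivAt_id s).const_mul (1.078:ℝ)).const_add A
  have := (((hlin.mul (hKd s)).neg).add ((hMd s).const_mul (1.078:ℝ)))
  refine this.congr_deriv ?_
  ring


lemma sqrt3_sq : Real.sqrt 3 * Real.sqrt 3 = 3 := Real.mul_self_sqrt (by norm_num)

-- trig values
lemma c56 : Real.cos (3*π/2*(5/9)) = -(Real.sqrt 3/2) := by
  rw [show 3*π/2*(5/9:ℝ) = π - π/6 by ring, Real.cos_pi_sub, Real.cos_pi_div_six]
lemma s56 : Real.sin (3*π/2*(5/9)) = 1/2 := by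
  rw [show 3*π/2*(5/9:ℝ) = π - π/6 by ring, Real.sin_pi_sub, Real.sin_pi_div_six]
lemma c53 : Real.cos (3*π*(5/9)) = 1/2 := by
  rw [show 3*π*(5/9:ℝ) = -(π/3) + 2*π by ring, Real.cos_add_two_pi, Real.cos_neg,
    Real.cos_pi_div_three]
lemma s53 : Real.sin (3*π*(5/9)) = -(Real.sqrt 3/2) := by
  rw [show 3*π*(5/9:ℝ) = -(π/3) + 2*π by ring, Real.sin_add_two_pi, Real.sin_neg,
    Real.sin_pi_div_three]
lemma c23a : Real.cos (3*π/2*(2/3)) = -1 := by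
  rw [show 3*π/2*(2/3:ℝ) = π by ring, Real.cos_pi]
lemma s23a : Real.sin (3*π/2*(2/3)) = 0 := by
  rw [show 3*π/2*(2/3:ℝ) = π by ring, Real.sin_pi]
lemma c23b : Real.cos (3*π*(2/3)) = 1 := by
  rw [show 3*π*(2/3:ℝ) = 2*π by ring, Real.cos_two_pi]
lemma s23b : Real.sin (3*π*(2/3)) = 0 := by
  rw [show 3*π*(2/3:ℝ) = 2*π by ring, Real.sin_two_pi]
lemma c76 : Real.cos (3*π/2*(7/9)) = -(Real.sqrt 3/2) := by
  rw [show 3*π/2*(7/9:ℝ) = π + π/6 by ring, Real.cos_add, Real.cos_pi, Real.sin_pi,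
    Real.cos_pi_div_six]; ring
lemma s76 : Real.sin (3*π/2*(7/9)) = -(1/2) := by
  rw [show 3*π/2*(7/9:ℝ) = π + π/6 by ring, Real.sin_add, Real.cos_pi, Real.sin_pi,
    Real.sin_pi_div_six]; ring
lemma c73 : Real.cos (3*π*(7/9)) = 1/2 := by
  rw [show 3*π*(7/9:ℝ) = π/3 + 2*π by ring, Real.cos_add_two_pi, Real.cos_pi_div_three]
lemma s73 : Real.sin (3*π*(7/9)) = Real.sqrt 3/2 := by
  rw [show 3*π*(7/9:ℝ) = π/3 + 2*π by ring, Real.sin_add_two_pi, Real.sin_pi_div_three]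
lemma c1a : Real.cos (3*π/2*1) = 0 := by
  rw [show 3*π/2*(1:ℝ) = π + π/2 by ring, Real.cos_add, Real.cos_pi, Real.sin_pi,
    Real.cos_pi_div_two]; ring
lemma s1a : Real.sin (3*π/2*1) = -1 := by
  rw [show 3*π/2*(1:ℝ) = π + π/2 by ring, Real.sin_add, Real.cos_pi, Real.sin_pi,
    Real.sin_pi_div_two]; ring
lemma c1b : Real.cos (3*π*1) = -1 := by
  rw [show 3*π*(1:ℝ) = π + 2*π by ring, Real.cos_add_two_pi, Real.cos_pi]
lemma s1b : Real.sin (3*π*1) = 0 := by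
  rw [show 3*π*(1:ℝ) = π + 2*π by ring, Real.sin_add_two_pi, Real.sin_pi]

-- K and M values
lemma K0 : K 0 = 2*Real.sqrt 3 + 1 := by simp [K]
lemma M0 : M 0 = 0 := by simp [M]
lemma K59 : K (5/9) = -(5/2) := by
  rw [K, c56, c53]; nlinarith [sqrt3_sq]
lemma M59 : M (5/9) = Real.sqrt 3/(2*π) := by
  rw [M, s56, s53]
  have hπ : (π:ℝ) ≠ 0 := Real.pi_ne_zero
  field_simp; ring
lemma K23 : K (2/3) = 1 - 2*Real.sqrt 3 := by rw [K, c23a, c23b]; ring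
lemma M23 : M (2/3) = 0 := by rw [M, s23a, s23b]; ring
lemma K79 : K (7/9) = -(5/2) := by rw [K, c76, c73]; nlinarith [sqrt3_sq]
lemma M79 : M (7/9) = -(Real.sqrt 3/(2*π)) := by
  rw [M, s76, s73]
  have hπ : (π:ℝ) ≠ 0 := Real.pi_ne_zero
  field_simp; ring
lemma K1 : K 1 = -1 := by rw [K, c1a, c1b]; ring
lemma M1 : M 1 = -(4*Real.sqrt 3/(3*π)) := by rw [M, s1a, s1b]; ring


lemma Sfact (s : ℝ) :
    S s = 3*π*(Real.sin (3*π/2*s) * (Real.sqrt 3 + 2*Real.cos (3*π/2*s))) := by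
  rw [S, show 3*π*s = 2*(3*π/2*s) by ring, Real.sin_two_mul]; ring

lemma cos56' : Real.cos (5*π/6) = -(Real.sqrt 3/2) := by
  rw [show 5*π/6 = π - π/6 by ring, Real.cos_pi_sub, Real.cos_pi_div_six]

lemma Spos1 {s : ℝ} (h0 : 0 ≤ s) (h1 : s ≤ 5/9) : 0 ≤ S s := by
  rw [Sfact]
  have hπ := Real.pi_pos
  have hθ0 : 0 ≤ 3*π/2*s := by positivity
  have hθ1 : 3*π/2*s ≤ 5*π/6 := by nlinarith
  have hsin : 0 ≤ Real.sin (3*π/2*s) :=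
    Real.sin_nonneg_of_nonneg_of_le_pi hθ0 (by nlinarith)
  have hcos : Real.cos (5*π/6) ≤ Real.cos (3*π/2*s) :=
    Real.cos_le_cos_of_nonneg_of_le_pi hθ0 (show 5*π/6 ≤ π by nlinarith) hθ1
  rw [cos56'] at hcos
  have key : 0 ≤ Real.sin (3*π/2*s) * (Real.sqrt 3 + 2*Real.cos (3*π/2*s)) :=
    mul_nonneg hsin (by linarith)
  nlinarith [mul_nonneg (le_of_lt hπ) key]

lemma Sneg2 {s : ℝ} (h0 : 5/9 ≤ s) (h1 : s ≤ 2/3) : S s ≤ 0 := by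
  rw [Sfact]
  have hπ := Real.pi_pos
  have hθ0 : (0:ℝ) ≤ 3*π/2*s := by nlinarith
  have hθ1 : 3*π/2*s ≤ π := by nlinarith
  have hsin : 0 ≤ Real.sin (3*π/2*s) := Real.sin_nonneg_of_nonneg_of_le_pi hθ0 hθ1
  have hcos : Real.cos (3*π/2*s) ≤ Real.cos (5*π/6) :=
    Real.cos_le_cos_of_nonneg_of_le_pi (show (0:ℝ) ≤ 5*π/6 by positivity) hθ1
      (by nlinarith)
  rw [cos56'] at hcos
  have key : Real.sin (3*π/2*s) * (Real.sqrt 3 + 2*Real.cos (3*π/2*s)) ≤ 0 :=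
    mul_nonpos_of_nonneg_of_nonpos hsin (by linarith)
  nlinarith [mul_nonpos_of_nonneg_of_nonpos (le_of_lt hπ) key]

lemma Spos3 {s : ℝ} (h0 : 2/3 ≤ s) (h1 : s ≤ 7/9) : 0 ≤ S s := by
  rw [Sfact]
  have hπ := Real.pi_pos
  have hrw : 3*π/2*s = π + (3*π/2*s - π) := by ring
  rw [hrw, Real.sin_add, Real.cos_add, Real.sin_pi, Real.cos_pi]
  generalize hg : 3*π/2*s - π = φ
  have hφ0 : 0 ≤ φ := by nlinarith [mul_nonneg (by linarith : (0:ℝ) ≤ 3*s-2) hπ.le]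
  have hφ1 : φ ≤ π/6 := by
    nlinarith [mul_nonpos_of_nonpos_of_nonneg (by linarith : 9*s-7 ≤ (0:ℝ)) hπ.le]
  have hsin : 0 ≤ Real.sin φ := Real.sin_nonneg_of_nonneg_of_le_pi hφ0 (by linarith)
  have hcos : Real.cos (π/6) ≤ Real.cos φ :=
    Real.cos_le_cos_of_nonneg_of_le_pi hφ0 (show π/6 ≤ π by nlinarith) hφ1
  rw [Real.cos_pi_div_six] at hcos
  have key : 0 ≤ Real.sin φ * (2*Real.cos φ - Real.sqrt 3) :=
    mul_nonneg hsin (by linarith)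
  nlinarith [mul_nonneg (le_of_lt hπ) key]

lemma Sneg4 {s : ℝ} (h0 : 7/9 ≤ s) (h1 : s ≤ 1) : S s ≤ 0 := by
  rw [Sfact]
  have hπ := Real.pi_pos
  have hrw : 3*π/2*s = π + (3*π/2*s - π) := by ring
  rw [hrw, Real.sin_add, Real.cos_add, Real.sin_pi, Real.cos_pi]
  generalize hg : 3*π/2*s - π = φ
  have hφ0 : π/6 ≤ φ := by
    nlinarith [mul_nonneg (by linarith : (0:ℝ) ≤ 9*s-7) hπ.le]
  have hφ1 : φ ≤ π/2 := by
    nlinarith [mul_nonpos_of_nonpos_of_nonneg (by linarith : s-1 ≤ (0:ℝ)) hπ.le]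
  have hsin : 0 ≤ Real.sin φ :=
    Real.sin_nonneg_of_nonneg_of_le_pi (by linarith) (by linarith)
  have hcos : Real.cos φ ≤ Real.cos (π/6) :=
    Real.cos_le_cos_of_nonneg_of_le_pi (show (0:ℝ) ≤ π/6 by positivity) (by linarith) hφ0
  rw [Real.cos_pi_div_six] at hcos
  have key : Real.sin φ * (2*Real.cos φ - Real.sqrt 3) ≤ 0 :=
    mul_nonpos_of_nonneg_of_nonpos hsin (by linarith)
  nlinarith [mul_nonpos_of_nonneg_of_nonpos (le_of_lt hπ) key]


lemma sqrt3_le_two : Real.sqrt 3 ≤ 2 := by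
  rw [show (2:ℝ) = Real.sqrt 4 by rw [show (4:ℝ) = 2^2 by norm_num, Real.sqrt_sq (by norm_num)]]
  exact Real.sqrt_le_sqrt (by norm_num)

lemma Sbd (s : ℝ) : |S s| ≤ 40 := by
  have hπ4 := Real.pi_le_four
  have hπ0 := Real.pi_pos
  have h3 := sqrt3_le_two
  have h30 := Real.sqrt_nonneg 3
  calc |S s| ≤ |2 * Real.sqrt 3 * (3*π/2) * Real.sin (3*π/2*s)| + |3*π*Real.sin (3*π*s)| :=
        abs_add_le _ _
    _ = 2 * Real.sqrt 3 * (3*π/2) * |Real.sin (3*π/2*s)| + 3*π*|Real.sin (3*π*s)| := by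
        rw [abs_mul (2*Real.sqrt 3*(3*π/2)) (Real.sin _), abs_mul (3*π) (Real.sin _),
          abs_of_nonneg (by positivity : (0:ℝ) ≤ 2*Real.sqrt 3*(3*π/2)),
          abs_of_nonneg (by positivity : (0:ℝ) ≤ 3*π)]
    _ ≤ 2 * 2 * (3*4/2) * 1 + 3*4*1 := by
        have hs1 := Real.abs_sin_le_one (3*π/2*s)
        have hs2 := Real.abs_sin_le_one (3*π*s)
        gcongr
    _ ≤ 40 := by norm_num

lemma Kbd (x : ℝ) : ‖K x‖ ≤ 5 := by
  have h3 := sqrt3_le_two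
  have h30 := Real.sqrt_nonneg 3
  rw [Real.norm_eq_abs]
  calc |K x| ≤ |2*Real.sqrt 3 * Real.cos (3*π/2*x)| + |Real.cos (3*π*x)| := abs_add_le _ _
    _ = 2*Real.sqrt 3 * |Real.cos (3*π/2*x)| + |Real.cos (3*π*x)| := by
        rw [abs_mul, abs_of_nonneg (by positivity : (0:ℝ) ≤ 2*Real.sqrt 3)]
    _ ≤ 2*2*1 + 1 := by
        have hc1 := Real.abs_cos_le_one (3*π/2*x)
        have hc2 := Real.abs_cos_le_one (3*π*x)
        gcongr
    _ ≤ 5 := by norm_num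

lemma Kabs (x : ℝ) : K |x| = K x := by
  unfold K
  rw [show 3*π/2*|x| = |3*π/2*x| by
      rw [abs_mul, abs_of_nonneg (by positivity : (0:ℝ) ≤ 3*π/2)],
    show 3*π*|x| = |3*π*x| by rw [abs_mul, abs_of_nonneg (by positivity : (0:ℝ) ≤ 3*π)],
    Real.cos_abs, Real.cos_abs]


set_option maxHeartbeats 1000000 in
theorem main_real (ν : Measure ℝ) [IsProbabilityMeasure ν]
    (hsym : ν.map (fun x => -x) = ν)
    (hsupp : ν (Set.Icc (-1:ℝ) 1) = 1)
    (hpos : ∀ l : ℝ, 0 ≤ ∫ x, Real.cos (l*x) ∂ν)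
    (hF : ∀ t ∈ Set.Icc (-1:ℝ) 1, (ν (Set.Iic t)).toReal ≤ 0.539*(t+1)) : False := by
  set H : ℝ → ℝ := fun s => (ν (Set.Icc (-s) s)).toReal with hHdef
  -- basic properties of H
  have hHmono : Monotone H := by
    intro u v huv
    exact ENNReal.toReal_le_toReal (measure_ne_top ν _) (measure_ne_top ν _) |>.mpr
      (measure_mono (Set.Icc_subset_Icc (neg_le_neg huv) huv))
  have hHmeas : Measurable H := hHmono.measurable
  have hH0 : ∀ s, 0 ≤ H s := fun s => ENNReal.toReal_nonneg
  have hH1 : ∀ s, H s ≤ 1 := by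
    intro s
    rw [hHdef]
    have := prob_le_one (μ := ν) (s := Set.Icc (-s) s)
    simpa using ENNReal.toReal_le_toReal (measure_ne_top ν _) ENNReal.one_ne_top |>.mpr this
  -- symmetry consequences
  have hNegPre : ∀ (A : Set ℝ), MeasurableSet A → ν ((fun x : ℝ => -x) ⁻¹' A) = ν A := by
    intro A hA
    conv_rhs => rw [← hsym]
    rw [Measure.map_apply measurable_neg hA]
  have hH2F : ∀ s : ℝ, 0 ≤ s → H s = 2*(ν (Set.Iic s)).toReal - 1 := by
    intro s hs
    have hIoi : ν (Set.Ioi s) = ν (Set.Iio (-s)) := by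
      rw [← hNegPre (Set.Iio (-s)) measurableSet_Iio]
      congr 1
      ext x; simp
    have hdecomp : Set.Iio (-s) ∪ Set.Icc (-s) s = Set.Iic s := by
      ext x
      simp only [Set.mem_union, Set.mem_Iio, Set.mem_Icc, Set.mem_Iic]
      constructor
      · rintro (h | ⟨h1, h2⟩) <;> linarith
      · intro h
        rcases lt_or_ge x (-s) with h1 | h1
        · exact Or.inl h1
        · exact Or.inr ⟨h1, h⟩
    have hdisj : Disjoint (Set.Iio (-s)) (Set.Icc (-s) s) :=
      (Set.Iio_disjoint_Ici le_rfl).mono_right Set.Icc_subset_Ici_self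
    have hadd : ν (Set.Iio (-s)) + ν (Set.Icc (-s) s) = ν (Set.Iic s) := by
      rw [← measure_union hdisj measurableSet_Icc, hdecomp]
    have hcompl : ν (Set.Iic s) + ν (Set.Ioi s) = 1 := by
      rw [← Set.compl_Iic (a := s), measure_add_measure_compl measurableSet_Iic, measure_univ]
    have h1 := congrArg ENNReal.toReal hadd
    have h2 := congrArg ENNReal.toReal hcompl
    rw [ENNReal.toReal_add (measure_ne_top ν _) (measure_ne_top ν _)] at h1
    rw [ENNReal.toReal_add (measure_ne_top ν _) (measure_ne_top ν _), ENNReal.toReal_one] at h2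
    have h3 := congrArg ENNReal.toReal hIoi
    rw [hHdef]
    simp only at h1 h2 h3 ⊢
    linarith
  have hHub : ∀ s : ℝ, 0 ≤ s → s ≤ 1 → H s ≤ 0.078 + 1.078*s := by
    intro s h0 h1
    rw [hH2F s h0]
    have := hF s ⟨by linarith, h1⟩
    linarith
  have hHlb : ∀ s : ℝ, 0 ≤ s → s ≤ 1 → -0.078 + 1.078*s ≤ H s := by
    intro s h0 h1
    rw [hH2F s h0]
    have hIci : ν (Set.Ici s) = ν (Set.Iic (-s)) := by
      rw [← hNegPre (Set.Iic (-s)) measurableSet_Iic]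
      congr 1
      ext x; simp
    have hcompl : ν (Set.Iic s) + ν (Set.Ioi s) = 1 := by
      rw [← Set.compl_Iic (a := s), measure_add_measure_compl measurableSet_Iic, measure_univ]
    have hmono : ν (Set.Ioi s) ≤ ν (Set.Ici s) := measure_mono Set.Ioi_subset_Ici_self
    have h2 := congrArg ENNReal.toReal hcompl
    rw [ENNReal.toReal_add (measure_ne_top ν _) (measure_ne_top ν _), ENNReal.toReal_one] at h2
    have h3 : (ν (Set.Ioi s)).toReal ≤ (ν (Set.Iic (-s))).toReal := by
      rw [← hIci]
      exact ENNReal.toReal_le_toReal (measure_ne_top ν _) (measure_ne_top ν _) |>.mpr hmono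
    have h4 := hF (-s) ⟨by linarith, by linarith⟩
    linarith
  -- the layer cake identity
  have hfin : IsFiniteMeasure (volume.restrict (Set.Ioc (0:ℝ) 1)) := by
    constructor
    rw [Measure.restrict_apply_univ]
    simp [Real.volume_Ioc]
  have hg_meas : Measurable (Function.uncurry (fun (x s : ℝ) => if |x| ≤ s then S s else 0)) := by
    have hset : MeasurableSet {p : ℝ × ℝ | |p.1| ≤ p.2} :=
      measurableSet_le (measurable_fst.abs) measurable_snd
    exact Measurable.ite hset (contS.measurable.comp measurable_snd) measurable_const
  have hg_int : Integrable (Function.uncurry (fun (x s : ℝ) => if |x| ≤ s then S s else 0))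
      (ν.prod (volume.restrict (Set.Ioc (0:ℝ) 1))) := by
    refine Integrable.mono' (integrable_const 40) hg_meas.aestronglyMeasurable ?_
    filter_upwards with p
    rcases p with ⟨x, s⟩
    simp only [Function.uncurry]
    split_ifs
    · simpa using Sbd s
    · simp
  have hinner_x : ∀ s : ℝ, ∫ x, (if |x| ≤ s then S s else 0) ∂ν = S s * H s := by
    intro s
    have heq : (fun x : ℝ => if |x| ≤ s then S s else 0)
        = Set.indicator (Set.Icc (-s) s) (fun _ => S s) := by
      funext x
      rw [Set.indicator_apply]
      exact if_congr (by rw [Set.mem_Icc, abs_le]) rfl rfl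
    rw [heq, integral_indicator_const _ measurableSet_Icc, smul_eq_mul, mul_comm]; rfl
  have hinner_s : ∀ x : ℝ, |x| ≤ 1 →
      ∫ s in Set.Ioc (0:ℝ) 1, (if |x| ≤ s then S s else 0) = K x - K 1 := by
    intro x hx
    have hc0 : (0:ℝ) ≤ |x| := abs_nonneg x
    have hvol1 : volume (Set.Ioc (0:ℝ) |x|) < ⊤ := by
      simp [Real.volume_Ioc]
    have hvol2 : volume (Set.Ioc |x| (1:ℝ)) < ⊤ := by
      simp [Real.volume_Ioc]
    have hmeas1 : Measurable (fun s : ℝ => if |x| ≤ s then S s else 0) := by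
      exact Measurable.ite (measurableSet_le measurable_const measurable_id)
        contS.measurable measurable_const
    have hbd : ∀ s : ℝ, ‖if |x| ≤ s then S s else 0‖ ≤ 40 := by
      intro s
      split_ifs
      · simpa using Sbd s
      · simp
    have hint1 : IntegrableOn (fun s : ℝ => if |x| ≤ s then S s else 0)
        (Set.Ioc 0 |x|) volume := by
      refine Integrable.mono' (integrableOn_const (C := (40:ℝ)) hvol1.ne)
        hmeas1.aestronglyMeasurable ?_
      filter_upwards with s using hbd s
    have hint2 : IntegrableOn (fun s : ℝ => if |x| ≤ s then S s else 0)
        (Set.Ioc |x| 1) volume := by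
      refine Integrable.mono' (integrableOn_const (C := (40:ℝ)) hvol2.ne)
        hmeas1.aestronglyMeasurable ?_
      filter_upwards with s using hbd s
    rw [show Set.Ioc (0:ℝ) 1 = Set.Ioc 0 |x| ∪ Set.Ioc |x| 1 from
        (Set.Ioc_union_Ioc_eq_Ioc hc0 hx).symm,
      setIntegral_union (Set.Ioc_disjoint_Ioc_of_le le_rfl) measurableSet_Ioc hint1 hint2]
    have hz : ∫ s in Set.Ioc (0:ℝ) |x|, (if |x| ≤ s then S s else 0) = 0 := by
      have hne : ∀ᵐ s : ℝ ∂volume, s ≠ |x| := by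
        rw [ae_iff]
        have : {s : ℝ | ¬ s ≠ |x|} = {|x|} := by ext s; simp
        rw [this]
        exact Real.volume_singleton
      rw [setIntegral_congr_ae measurableSet_Ioc
        (g := fun _ => (0:ℝ)) ?_]
      · simp
      · filter_upwards [hne] with s hs hmem
        have : ¬ (|x| ≤ s) := by
          rcases hmem with ⟨_, h2⟩
          exact fun hle => hs (le_antisymm h2 hle)
        rw [if_neg this]
    have hS2 : ∫ s in Set.Ioc |x| (1:ℝ), (if |x| ≤ s then S s else 0)
        = ∫ s in Set.Ioc |x| (1:ℝ), S s := by
      refine setIntegral_congr_fun measurableSet_Ioc ?_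
      intro s hs
      show (if |x| ≤ s then S s else 0) = S s
      rw [if_pos hs.1.le]
    have hftc : ∫ s in Set.Ioc |x| (1:ℝ), S s = K |x| - K 1 := by
      rw [← intervalIntegral.integral_of_le hx]
      have h1 : ∫ s in |x|..(1:ℝ), -(S s) = K 1 - K |x| :=
        intervalIntegral.integral_eq_sub_of_hasDerivAt (fun s _ => hKd s)
          ((contS.neg.intervalIntegrable _ _))
      rw [intervalIntegral.integral_neg] at h1
      linarith
    rw [hz, hS2, hftc, Kabs]
    ring
  have hae : ∀ᵐ x ∂ν, |x| ≤ 1 := by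
    have h0 : ν (Set.Icc (-1:ℝ) 1)ᶜ = 0 :=
      (prob_compl_eq_zero_iff measurableSet_Icc).mpr hsupp
    rw [ae_iff]
    have : {x : ℝ | ¬ |x| ≤ 1} ⊆ (Set.Icc (-1:ℝ) 1)ᶜ := by
      intro x hx
      simp only [Set.mem_compl_iff, Set.mem_Icc]
      simp only [Set.mem_setOf_eq, abs_le] at hx
      tauto
    exact measure_mono_null this h0
  have hKint : Integrable K ν :=
    Integrable.mono' (integrable_const 5) contK.aestronglyMeasurable
      (Filter.Eventually.of_forall Kbd)
  have hEK : ∫ x, K x ∂ν - K 1 = ∫ s in Set.Ioc (0:ℝ) 1, S s * H s := by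
    calc ∫ x, K x ∂ν - K 1 = ∫ x, (K x - K 1) ∂ν := by
          rw [integral_sub hKint (integrable_const _), integral_const, probReal_univ,
            one_smul]
      _ = ∫ x, (∫ s in Set.Ioc (0:ℝ) 1, (if |x| ≤ s then S s else 0)) ∂ν := by
          refine integral_congr_ae ?_
          filter_upwards [hae] with x hx
          exact (hinner_s x hx).symm
      _ = ∫ s in Set.Ioc (0:ℝ) 1, (∫ x, (if |x| ≤ s then S s else 0) ∂ν) :=
          integral_integral_swap hg_int
      _ = ∫ s in Set.Ioc (0:ℝ) 1, S s * H s := by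
          refine integral_congr_ae (Filter.Eventually.of_forall fun s => ?_)
          exact hinner_x s
  -- integrability of S * H on subintervals
  have hSH_int : ∀ u v : ℝ, IntegrableOn (fun s => S s * H s) (Set.Ioc u v) volume := by
    intro u v
    have hvol : volume (Set.Ioc u v) < ⊤ := by simp [Real.volume_Ioc]
    refine Integrable.mono' (integrableOn_const (C := (40:ℝ)) hvol.ne)
      ((contS.measurable.mul hHmeas).aestronglyMeasurable) ?_
    filter_upwards with s
    rw [Real.norm_eq_abs, abs_mul]
    calc |S s| * |H s| ≤ 40 * 1 := by
          apply mul_le_mul (Sbd s) _ (abs_nonneg _) (by norm_num)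
          rw [abs_of_nonneg (hH0 s)]; exact hH1 s
      _ = 40 := by norm_num
  have hSL_int : ∀ (A : ℝ) (u v : ℝ),
      IntegrableOn (fun s => S s * (A + 1.078*s)) (Set.Ioc u v) volume := by
    intro A u v
    exact (contS.mul (continuous_const.add (continuous_const.mul continuous_id))).integrableOn_Ioc
  -- splitting into four intervals
  have hsplit : ∫ s in Set.Ioc (0:ℝ) 1, S s * H s
      = (∫ s in Set.Ioc (0:ℝ) (5/9), S s * H s) + (∫ s in Set.Ioc (5/9:ℝ) (2/3), S s * H s)
        + (∫ s in Set.Ioc (2/3:ℝ) (7/9), S s * H s) + (∫ s in Set.Ioc (7/9:ℝ) 1, S s * H s) := by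
    rw [show Set.Ioc (0:ℝ) 1 = Set.Ioc (0:ℝ) (7/9) ∪ Set.Ioc (7/9:ℝ) 1 from
        (Set.Ioc_union_Ioc_eq_Ioc (by norm_num) (by norm_num)).symm,
      setIntegral_union (Set.Ioc_disjoint_Ioc_of_le le_rfl) measurableSet_Ioc (hSH_int _ _) (hSH_int _ _),
      show Set.Ioc (0:ℝ) (7/9) = Set.Ioc (0:ℝ) (2/3) ∪ Set.Ioc (2/3:ℝ) (7/9) from
        (Set.Ioc_union_Ioc_eq_Ioc (by norm_num) (by norm_num)).symm,
      setIntegral_union (Set.Ioc_disjoint_Ioc_of_le le_rfl) measurableSet_Ioc (hSH_int _ _) (hSH_int _ _),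
      show Set.Ioc (0:ℝ) (2/3) = Set.Ioc (0:ℝ) (5/9) ∪ Set.Ioc (5/9:ℝ) (2/3) from
        (Set.Ioc_union_Ioc_eq_Ioc (by norm_num) (by norm_num)).symm,
      setIntegral_union (Set.Ioc_disjoint_Ioc_of_le le_rfl) measurableSet_Ioc (hSH_int _ _) (hSH_int _ _)]
  -- bound each piece
  have hb1 : ∫ s in Set.Ioc (0:ℝ) (5/9), S s * H s
      ≤ ∫ s in Set.Ioc (0:ℝ) (5/9), S s * (0.078 + 1.078*s) := by
    refine setIntegral_mono_on (hSH_int _ _) (hSL_int _ _ _) measurableSet_Ioc ?_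
    intro s hs
    exact mul_le_mul_of_nonneg_left (hHub s hs.1.le (by linarith [hs.2]))
      (Spos1 hs.1.le hs.2)
  have hb2 : ∫ s in Set.Ioc (5/9:ℝ) (2/3), S s * H s
      ≤ ∫ s in Set.Ioc (5/9:ℝ) (2/3), S s * (-0.078 + 1.078*s) := by
    refine setIntegral_mono_on (hSH_int _ _) (hSL_int _ _ _) measurableSet_Ioc ?_
    intro s hs
    exact mul_le_mul_of_nonpos_left (hHlb s (by linarith [hs.1]) (by linarith [hs.2]))
      (Sneg2 hs.1.le hs.2)
  have hb3 : ∫ s in Set.Ioc (2/3:ℝ) (7/9), S s * H s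
      ≤ ∫ s in Set.Ioc (2/3:ℝ) (7/9), S s * (0.078 + 1.078*s) := by
    refine setIntegral_mono_on (hSH_int _ _) (hSL_int _ _ _) measurableSet_Ioc ?_
    intro s hs
    exact mul_le_mul_of_nonneg_left (hHub s (by linarith [hs.1]) (by linarith [hs.2]))
      (Spos3 hs.1.le hs.2)
  have hb4 : ∫ s in Set.Ioc (7/9:ℝ) 1, S s * H s
      ≤ ∫ s in Set.Ioc (7/9:ℝ) 1, S s * (-0.078 + 1.078*s) := by
    refine setIntegral_mono_on (hSH_int _ _) (hSL_int _ _ _) measurableSet_Ioc ?_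
    intro s hs
    exact mul_le_mul_of_nonpos_left (hHlb s (by linarith [hs.1]) hs.2)
      (Sneg4 hs.1.le hs.2)
  -- FTC for the linear pieces
  have hFTC : ∀ A u v : ℝ, u ≤ v → ∫ s in Set.Ioc u v, S s * (A + 1.078*s)
      = (-((A + 1.078*v) * K v) + 1.078 * M v) - (-((A + 1.078*u) * K u) + 1.078 * M u) := by
    intro A u v huv
    rw [← intervalIntegral.integral_of_le huv]
    exact intervalIntegral.integral_eq_sub_of_hasDerivAt (fun s _ => hGd A s)
      ((contS.mul (continuous_const.add (continuous_const.mul continuous_id))).intervalIntegrable _ _)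
  -- nonnegativity of the kernel expectation
  have hcos_int : ∀ l : ℝ, Integrable (fun x => Real.cos (l*x)) ν := by
    intro l
    refine Integrable.mono' (integrable_const 1)
      ((Real.continuous_cos.comp (continuous_const.mul continuous_id)).aestronglyMeasurable) ?_
    filter_upwards with x
    rw [Real.norm_eq_abs]
    exact Real.abs_cos_le_one _
  have hKpos : 0 ≤ ∫ x, K x ∂ν := by
    have hexp : ∫ x, K x ∂ν
        = 2*Real.sqrt 3 * (∫ x, Real.cos ((3*π/2)*x) ∂ν) + ∫ x, Real.cos ((3*π)*x) ∂ν := by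
      rw [← integral_const_mul, ← integral_add ((hcos_int (3*π/2)).const_mul _) (hcos_int (3*π))]
      rfl
    rw [hexp]
    have h1 := hpos (3*π/2)
    have h2 := hpos (3*π)
    have h3 := Real.sqrt_nonneg 3
    positivity
  -- put in the closed forms
  have e1 := hFTC 0.078 0 (5/9) (by norm_num)
  have e2 := hFTC (-0.078) (5/9) (2/3) (by norm_num)
  have e3 := hFTC 0.078 (2/3) (7/9) (by norm_num)
  have e4 := hFTC (-0.078) (7/9) 1 (by norm_num)
  rw [e1, K0, K59, M0, M59] at hb1
  rw [e2, K59, K23, M59, M23] at hb2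
  rw [e3, K23, K79, M23, M79] at hb3
  rw [e4, K79, K1, M79, M1] at hb4
  have hEK' : 0 ≤ K 1 + ∫ s in Set.Ioc (0:ℝ) 1, S s * H s := by
    have : K 1 + ∫ s in Set.Ioc (0:ℝ) 1, S s * H s = ∫ x, K x ∂ν := by
      rw [← hEK]; ring
    rw [this]; exact hKpos
  rw [K1, hsplit] at hEK'
  -- final numerics
  have hπ0 : 0 < π := Real.pi_pos
  have hπu : π < 3.1416 := by
    have := Real.pi_lt_d6; linarith
  have h3l : (1.732:ℝ) < Real.sqrt 3 := by
    rw [show (1.732:ℝ) = Real.sqrt (1.732^2) from (Real.sqrt_sq (by norm_num)).symm]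
    exact Real.sqrt_lt_sqrt (by positivity) (by norm_num)
  have hdiv : (0.79:ℝ) < 1.078 * (4*Real.sqrt 3/(3*π)) := by
    rw [show 1.078 * (4*Real.sqrt 3/(3*π)) = (1.078*4*Real.sqrt 3)/(3*π) by ring,
      lt_div_iff₀ (by positivity)]
    linarith
  linarith
end Stmt10Aux
end

open MeasureTheory

/-- For every probability distribution `D` supported on `[0,1]`, if `X`
and `Y` are independent random variables each distributed according to `D`, then there
exists `t ∈ [-1,1]` with `Pr[X - Y ≤ t] > 0.539·(t + 1)`. -/
theorem stmt_10 {Ω : Type*} [MeasurableSpace Ω] (μ : Measure Ω) [IsProbabilityMeasure μ]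
    (D : Measure ℝ) [IsProbabilityMeasure D] (hD01 : D (Set.Icc (0 : ℝ) 1) = 1)
    (X Y : Ω → ℝ) (hX : Measurable X) (hY : Measurable Y)
    (hind : ProbabilityTheory.IndepFun X Y μ)
    (hXd : μ.map X = D) (hYd : μ.map Y = D) :
    ∃ t ∈ Set.Icc (-1 : ℝ) 1,
      0.539 * (t + 1) < (μ {ω | X ω - Y ω ≤ t}).toReal := by
  by_contra hcon
  push_neg at hcon
  have hW : Measurable (fun ω => X ω - Y ω) := hX.sub hY
  set W : Ω → ℝ := fun ω => X ω - Y ω with hWdef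
  set ν : Measure ℝ := μ.map W with hνdef
  haveI : IsProbabilityMeasure ν := Measure.isProbabilityMeasure_map hW.aemeasurable
  have hsubm : Measurable (fun p : ℝ × ℝ => p.1 - p.2) := measurable_fst.sub measurable_snd
  -- symmetry
  have hXYind := (ProbabilityTheory.indepFun_iff_map_prod_eq_prod_map_map
    hX.aemeasurable hY.aemeasurable).mp hind
  have hYXind := (ProbabilityTheory.indepFun_iff_map_prod_eq_prod_map_map
    hY.aemeasurable hX.aemeasurable).mp hind.symm
  have h1 : ν = (D.prod D).map (fun p : ℝ × ℝ => p.1 - p.2) := by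
    rw [hνdef, show D.prod D = (μ.map X).prod (μ.map Y) by rw [hXd, hYd], ← hXYind,
      Measure.map_map hsubm (hX.prodMk hY)]
    rfl
  have hsym : ν.map (fun x : ℝ => -x) = ν := by
    have h3 : μ.map (fun ω => Y ω - X ω)
        = ((μ.map Y).prod (μ.map X)).map (fun p : ℝ × ℝ => p.1 - p.2) := by
      rw [← hYXind, Measure.map_map hsubm (hY.prodMk hX)]
      rfl
    have h2 : ν.map (fun x : ℝ => -x) = (D.prod D).map (fun p : ℝ × ℝ => p.1 - p.2) := by
      rw [hνdef, Measure.map_map measurable_neg hW]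
      have h4 : ((fun x : ℝ => -x) ∘ W) = fun ω => Y ω - X ω := by
        funext ω
        simp only [Function.comp_apply, hWdef]
        ring
      rw [h4, h3, hYd, hXd]
    rw [h2, ← h1]
  -- support
  have hsupp : ν (Set.Icc (-1:ℝ) 1) = 1 := by
    rw [hνdef, Measure.map_apply hW measurableSet_Icc]
    have hX1 : μ (X ⁻¹' Set.Icc 0 1) = 1 := by
      rw [← Measure.map_apply hX measurableSet_Icc, hXd]; exact hD01
    have hY1 : μ (Y ⁻¹' Set.Icc 0 1) = 1 := by
      rw [← Measure.map_apply hY measurableSet_Icc, hYd]; exact hD01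
    have hint : μ (X ⁻¹' Set.Icc 0 1 ∩ Y ⁻¹' Set.Icc 0 1) = 1 := by
      have hc1 : μ (X ⁻¹' Set.Icc 0 1)ᶜ = 0 :=
        (prob_compl_eq_zero_iff (hX measurableSet_Icc)).mpr hX1
      have hc2 : μ (Y ⁻¹' Set.Icc 0 1)ᶜ = 0 :=
        (prob_compl_eq_zero_iff (hY measurableSet_Icc)).mpr hY1
      have : μ (X ⁻¹' Set.Icc 0 1 ∩ Y ⁻¹' Set.Icc 0 1)ᶜ = 0 := by
        rw [Set.compl_inter]
        exact le_antisymm (le_trans (measure_union_le _ _) (by rw [hc1, hc2]; simp))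
          zero_le
      exact (prob_compl_eq_zero_iff ((hX measurableSet_Icc).inter
        (hY measurableSet_Icc))).mp this
    have hsub : X ⁻¹' Set.Icc 0 1 ∩ Y ⁻¹' Set.Icc 0 1 ⊆ W ⁻¹' Set.Icc (-1:ℝ) 1 := by
      intro ω hω
      obtain ⟨h1', h2'⟩ := hω
      simp only [Set.mem_preimage, Set.mem_Icc] at h1' h2'
      refine Set.mem_preimage.mpr (Set.mem_Icc.mpr ⟨?_, ?_⟩)
      · show (-1:ℝ) ≤ X ω - Y ω
        linarith [h1'.1, h2'.2]
      · show X ω - Y ω ≤ (1:ℝ)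
        linarith [h1'.2, h2'.1]
    exact le_antisymm prob_le_one (hint ▸ measure_mono hsub)
  -- positivity of cosine expectations
  have hpos : ∀ l : ℝ, 0 ≤ ∫ x, Real.cos (l*x) ∂ν := by
    intro l
    have hmc : Measurable fun x : ℝ => Real.cos (l*x) := (measurable_const.mul measurable_id).cos
    have hms : Measurable fun x : ℝ => Real.sin (l*x) := (measurable_const.mul measurable_id).sin
    rw [hνdef, integral_map hW.aemeasurable hmc.aestronglyMeasurable]
    have hexp : (fun ω => Real.cos (l * W ω))
        = fun ω => Real.cos (l * X ω) * Real.cos (l * Y ω)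
          + Real.sin (l * X ω) * Real.sin (l * Y ω) := by
      funext ω
      simp only [hWdef]
      rw [mul_sub, Real.cos_sub]
    have hintc : ∀ (Z : Ω → ℝ), Measurable Z → Integrable (fun ω => Real.cos (l * Z ω)) μ := by
      intro Z hZ
      refine Integrable.mono' (integrable_const 1) (hmc.comp hZ).aestronglyMeasurable ?_
      filter_upwards with ω
      rw [Real.norm_eq_abs]
      exact Real.abs_cos_le_one _
    have hints : ∀ (Z : Ω → ℝ), Measurable Z → Integrable (fun ω => Real.sin (l * Z ω)) μ := by
      intro Z hZ
      refine Integrable.mono' (integrable_const 1) (hms.comp hZ).aestronglyMeasurable ?_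
      filter_upwards with ω
      rw [Real.norm_eq_abs]
      exact Real.abs_sin_le_one _
    have hic : ProbabilityTheory.IndepFun (fun ω => Real.cos (l * X ω))
        (fun ω => Real.cos (l * Y ω)) μ := hind.comp hmc hmc
    have his : ProbabilityTheory.IndepFun (fun ω => Real.sin (l * X ω))
        (fun ω => Real.sin (l * Y ω)) μ := hind.comp hms hms
    have hmulc : Integrable (fun ω => Real.cos (l * X ω) * Real.cos (l * Y ω)) μ :=
      hic.integrable_mul (hintc X hX) (hintc Y hY)
    have hmuls : Integrable (fun ω => Real.sin (l * X ω) * Real.sin (l * Y ω)) μ :=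
      his.integrable_mul (hints X hX) (hints Y hY)
    have e1 : ∫ ω, Real.cos (l * X ω) * Real.cos (l * Y ω) ∂μ
        = (∫ ω, Real.cos (l * X ω) ∂μ) * ∫ ω, Real.cos (l * Y ω) ∂μ :=
      hic.integral_mul_eq_mul_integral (hintc X hX).aestronglyMeasurable (hintc Y hY).aestronglyMeasurable
    have e2 : ∫ ω, Real.sin (l * X ω) * Real.sin (l * Y ω) ∂μ
        = (∫ ω, Real.sin (l * X ω) ∂μ) * ∫ ω, Real.sin (l * Y ω) ∂μ :=
      his.integral_mul_eq_mul_integral (hints X hX).aestronglyMeasurable (hints Y hY).aestronglyMeasurable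
    rw [hexp, integral_add hmulc hmuls, e1, e2]
    have hcXY : ∫ ω, Real.cos (l * X ω) ∂μ = ∫ ω, Real.cos (l * Y ω) ∂μ := by
      rw [← integral_map hX.aemeasurable hmc.aestronglyMeasurable,
        ← integral_map hY.aemeasurable hmc.aestronglyMeasurable, hXd, hYd]
    have hsXY : ∫ ω, Real.sin (l * X ω) ∂μ = ∫ ω, Real.sin (l * Y ω) ∂μ := by
      rw [← integral_map hX.aemeasurable hms.aestronglyMeasurable,
        ← integral_map hY.aemeasurable hms.aestronglyMeasurable, hXd, hYd]
    rw [← hcXY, ← hsXY]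
    nlinarith [mul_self_nonneg (∫ ω, Real.cos (l * X ω) ∂μ),
      mul_self_nonneg (∫ ω, Real.sin (l * X ω) ∂μ)]
  -- CDF bound
  have hF : ∀ t ∈ Set.Icc (-1:ℝ) 1, (ν (Set.Iic t)).toReal ≤ 0.539*(t+1) := by
    intro t ht
    rw [hνdef, Measure.map_apply hW measurableSet_Iic]
    exact hcon t ht
  exact Stmt10Aux.main_real ν hsym hsupp hpos hF
end

section
/- Let D be a probability distribution supported on [0,1], let X and Y be independent samples from D, and suppose α ≥ 1/2 satisfies Pr[X − Y ≤ x] ≤ α·(x+1) for all x ∈ [-1,1]. Then for every t ∈ (π, 2π), α ≥ 1/2 + (−sin t)/(6t + 2·sin t). In particular, taking t = 4.5 yields α ≥ 1/2 + (−sin 4.5)/(27 + 2·sin 4.5) > 0.539. -/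
open MeasureTheory Real Set
open scoped ENNReal

lemma sin_nonpos_pi_two_pi {x : ℝ} (h1 : π ≤ x) (h2 : x ≤ 2 * π) : Real.sin x ≤ 0 := by
  have : Real.sin (x - π) = -Real.sin x := Real.sin_sub_pi x
  nlinarith [Real.sin_nonneg_of_nonneg_of_le_pi (by linarith : (0:ℝ) ≤ x - π) (by linarith : x - π ≤ π)]

lemma my_intervalIntegrable {f : ℝ → ℝ} (hf : Measurable f) {C : ℝ}
    (hC : ∀ x, |f x| ≤ C) (a b : ℝ) : IntervalIntegrable f volume a b := by
  apply IntervalIntegrable.mono_fun (intervalIntegrable_const (c := C))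
  · exact hf.aestronglyMeasurable
  · exact Filter.Eventually.of_forall fun x => by
      simpa [abs_of_nonneg ((abs_nonneg _).trans (hC 0))] using hC x

noncomputable def psi (t c d : ℝ) (s : ℝ) : ℝ :=
  (-(c * s + d) * Real.cos (t * s)) / t + c * Real.sin (t * s) / t ^ 2

lemma integral_sin_linear {t : ℝ} (ht : t ≠ 0) (c d a b : ℝ) :
    ∫ s in a..b, Real.sin (t * s) * (c * s + d) = psi t c d b - psi t c d a := by
  apply intervalIntegral.integral_eq_sub_of_hasDerivAt
  · intro s _
    have h1 : HasDerivAt (fun s : ℝ => t * s) t s := by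
      simpa using (hasDerivAt_id s).const_mul t
    have hcos : HasDerivAt (fun s : ℝ => Real.cos (t * s)) (-Real.sin (t * s) * t) s := h1.cos
    have hsin : HasDerivAt (fun s : ℝ => Real.sin (t * s)) (Real.cos (t * s) * t) s := h1.sin
    have hlin : HasDerivAt (fun s : ℝ => -(c * s + d)) (-c) s := by
      have h := (((hasDerivAt_id' s).const_mul c).add_const d).neg
      rw [mul_one] at h
      exact h
    have := ((hlin.mul hcos).div_const t).add ((hsin.const_mul c).div_const (t ^ 2))
    convert this using 1
    · ext x; simp only [psi, Pi.add_apply, Pi.mul_apply]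
    field_simp
    ring
  · apply (Continuous.intervalIntegrable ?_)
    continuity

lemma integrable_of_bdd {Ω : Type*} [MeasurableSpace Ω] {μ : Measure Ω} [IsFiniteMeasure μ]
    {f : Ω → ℝ} (hf : AEStronglyMeasurable f μ) {C : ℝ} (hC : ∀ x, |f x| ≤ C) :
    Integrable f μ := by
  apply Integrable.mono' (integrable_const C) hf
  exact Filter.Eventually.of_forall fun x => by simpa using hC x

lemma key {Ω : Type*} [MeasurableSpace Ω] (μ : Measure Ω) [IsProbabilityMeasure μ]
    (D : Measure ℝ) [IsProbabilityMeasure D] (hD01 : D (Set.Icc (0 : ℝ) 1) = 1)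
    (X Y : Ω → ℝ) (hX : Measurable X) (hY : Measurable Y)
    (hind : ProbabilityTheory.IndepFun X Y μ)
    (hXd : μ.map X = D) (hYd : μ.map Y = D)
    (α : ℝ)
    (hcdf : ∀ x ∈ Set.Icc (-1 : ℝ) 1,
      (μ {ω | X ω - Y ω ≤ x}).toReal ≤ α * (x + 1))
    (t : ℝ) (hπt : Real.pi < t) (ht2 : t < 2 * Real.pi) :
    1 / 2 + (-Real.sin t) / (6 * t + 2 * Real.sin t) ≤ α := by
  have hπ := Real.pi_gt_three
  have ht0 : (0:ℝ) < t := by linarith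
  have htne : t ≠ 0 := ne_of_gt ht0
  set Z : Ω → ℝ := fun ω => X ω - Y ω with hZdef
  have hZ : Measurable Z := hX.sub hY
  set ρ : Measure ℝ := μ.map Z with hρdef
  haveI : IsProbabilityMeasure ρ := Measure.isProbabilityMeasure_map hZ.aemeasurable
  set F : ℝ → ℝ := fun s => (ρ (Set.Iic s)).toReal with hFdef
  have hρIic : ∀ s : ℝ, ρ (Set.Iic s) = μ {ω | Z ω ≤ s} := by
    intro s
    rw [hρdef, Measure.map_apply hZ measurableSet_Iic]
    rfl
  have hF_le : ∀ s ∈ Set.Icc (-1:ℝ) 1, F s ≤ α * (s + 1) := by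
    intro s hs
    rw [hFdef]
    simp only [hρIic s]
    exact hcdf s hs
  have hF01 : ∀ s, 0 ≤ F s ∧ F s ≤ 1 := by
    intro s
    constructor
    · exact ENNReal.toReal_nonneg
    · rw [hFdef]
      simp only
      rw [← ENNReal.toReal_one]
      exact ENNReal.toReal_mono ENNReal.one_ne_top prob_le_one
  have hFmono : Monotone F := by
    intro a b hab
    apply ENNReal.toReal_mono (measure_ne_top _ _)
    exact measure_mono (Set.Iic_subset_Iic.2 hab)
  have hFmeas : Measurable F := hFmono.measurable
  have hmap_prod : μ.map (fun ω => (X ω, Y ω)) = D.prod D := by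
    have h := (ProbabilityTheory.indepFun_iff_map_prod_eq_prod_map_map
      hX.aemeasurable hY.aemeasurable).mp hind
    rwa [hXd, hYd] at h
  have hρ_eq : ρ = (D.prod D).map (fun p : ℝ × ℝ => p.1 - p.2) := by
    rw [hρdef, ← hmap_prod,
      Measure.map_map (g := fun p : ℝ × ℝ => p.1 - p.2) (measurable_fst.sub measurable_snd) (hX.prodMk hY)]
    rfl
  have hsymm : ρ.map (fun x : ℝ => -x) = ρ := by
    rw [hρ_eq, Measure.map_map (g := fun x : ℝ => -x) (f := fun p : ℝ × ℝ => p.1 - p.2) measurable_neg (measurable_fst.sub measurable_snd)]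
    have h1 : ((fun x : ℝ => -x) ∘ fun p : ℝ × ℝ => p.1 - p.2)
        = (fun p : ℝ × ℝ => p.1 - p.2) ∘ Prod.swap := by
      ext p; simp [Function.comp, neg_sub]
    rw [h1, ← Measure.map_map (g := fun p : ℝ × ℝ => p.1 - p.2) (measurable_fst.sub measurable_snd) measurable_swap,
      Measure.prod_swap]
  have hF_ge : ∀ s ∈ Set.Icc (-1:ℝ) 1, 1 - α * (1 - s) ≤ F s := by
    intro s hs
    have h1 : ρ (Set.Iic (-s)) = ρ (Set.Ici s) := by
      conv_lhs => rw [← hsymm]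
      rw [Measure.map_apply measurable_neg measurableSet_Iic]
      congr 1
      ext x
      simp
    have h2 : (1:ℝ≥0∞) ≤ ρ (Set.Iic s) + ρ (Set.Ici s) := by
      have : ρ (Set.Iic s ∪ Set.Ici s) = 1 := by
        rw [Set.Iic_union_Ici]; exact measure_univ
      calc (1:ℝ≥0∞) = ρ (Set.Iic s ∪ Set.Ici s) := this.symm
        _ ≤ ρ (Set.Iic s) + ρ (Set.Ici s) := measure_union_le _ _
    have h3 : (1:ℝ) ≤ F s + F (-s) := by
      rw [hFdef]
      simp only [h1]
      have := ENNReal.toReal_mono (a := 1) (b := ρ (Set.Iic s) + ρ (Set.Ici s))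
        (by finiteness) h2
      rwa [ENNReal.toReal_one, ENNReal.toReal_add (measure_ne_top _ _) (measure_ne_top _ _)] at this
    have h4 : F (-s) ≤ α * (-s + 1) := hF_le (-s) ⟨by linarith [hs.2], by linarith [hs.1]⟩
    nlinarith
  have hsupp : ∀ᵐ z ∂ρ, z ∈ Set.Icc (-1:ℝ) 1 := by
    have h1 : ρ (Set.Icc (-1:ℝ) 1) = 1 := by
      apply le_antisymm prob_le_one
      rw [hρ_eq, Measure.map_apply (f := fun p : ℝ × ℝ => p.1 - p.2) (measurable_fst.sub measurable_snd) measurableSet_Icc]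
      have hsub : (Set.Icc (0:ℝ) 1) ×ˢ (Set.Icc (0:ℝ) 1)
          ⊆ (fun p : ℝ × ℝ => p.1 - p.2) ⁻¹' Set.Icc (-1:ℝ) 1 := by
        rintro ⟨x, y⟩ ⟨⟨hx0, hx1⟩, ⟨hy0, hy1⟩⟩
        constructor <;> simp <;> linarith
      calc (1:ℝ≥0∞) = D.prod D ((Set.Icc (0:ℝ) 1) ×ˢ (Set.Icc (0:ℝ) 1)) := by
            rw [Measure.prod_prod, hD01, one_mul]
        _ ≤ _ := measure_mono hsub
    rw [MeasureTheory.ae_iff]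
    have : {z : ℝ | ¬ z ∈ Set.Icc (-1:ℝ) 1} = (Set.Icc (-1:ℝ) 1)ᶜ := rfl
    rw [this, prob_compl_eq_zero_iff measurableSet_Icc]
    exact h1
  have hpos : 0 ≤ ∫ z, Real.cos (t * z) ∂ρ := by
    have hcosm : Measurable fun x : ℝ => Real.cos (t * x) :=
      Real.continuous_cos.measurable.comp (measurable_const.mul measurable_id)
    have hsinm : Measurable fun x : ℝ => Real.sin (t * x) :=
      Real.continuous_sin.measurable.comp (measurable_const.mul measurable_id)
    have h0 : ∫ z, Real.cos (t * z) ∂ρ = ∫ ω, Real.cos (t * Z ω) ∂μ := by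
      rw [hρdef]
      exact integral_map hZ.aemeasurable hcosm.aestronglyMeasurable
    have h1 : ∀ ω, Real.cos (t * Z ω)
        = Real.cos (t * X ω) * Real.cos (t * Y ω) + Real.sin (t * X ω) * Real.sin (t * Y ω) := by
      intro ω
      rw [hZdef]
      simp only [mul_sub]
      rw [Real.cos_sub]
    have hindc : ProbabilityTheory.IndepFun (fun ω => Real.cos (t * X ω))
        (fun ω => Real.cos (t * Y ω)) μ := hind.comp hcosm hcosm
    have hinds : ProbabilityTheory.IndepFun (fun ω => Real.sin (t * X ω))
        (fun ω => Real.sin (t * Y ω)) μ := hind.comp hsinm hsinm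
    have hicX : Integrable (fun ω => Real.cos (t * X ω)) μ :=
      integrable_of_bdd ((hcosm.comp hX).aestronglyMeasurable)
        (fun x => Real.abs_cos_le_one _)
    have hicY : Integrable (fun ω => Real.cos (t * Y ω)) μ :=
      integrable_of_bdd ((hcosm.comp hY).aestronglyMeasurable)
        (fun x => Real.abs_cos_le_one _)
    have hisX : Integrable (fun ω => Real.sin (t * X ω)) μ :=
      integrable_of_bdd ((hsinm.comp hX).aestronglyMeasurable)
        (fun x => Real.abs_sin_le_one _)
    have hisY : Integrable (fun ω => Real.sin (t * Y ω)) μ :=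
      integrable_of_bdd ((hsinm.comp hY).aestronglyMeasurable)
        (fun x => Real.abs_sin_le_one _)
    have h2 : ∫ ω, Real.cos (t * Z ω) ∂μ
        = (∫ ω, Real.cos (t * X ω) ∂μ) * (∫ ω, Real.cos (t * Y ω) ∂μ)
          + (∫ ω, Real.sin (t * X ω) ∂μ) * (∫ ω, Real.sin (t * Y ω) ∂μ) := by
      simp only [h1]
      have hi1 : Integrable (fun ω => Real.cos (t * X ω) * Real.cos (t * Y ω)) μ :=
        integrable_of_bdd (((hcosm.comp hX).mul (hcosm.comp hY)).aestronglyMeasurable)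
          (C := 1) (fun x => by
            rw [abs_mul]
            exact mul_le_one₀ (Real.abs_cos_le_one _) (abs_nonneg _) (Real.abs_cos_le_one _))
      have hi2 : Integrable (fun ω => Real.sin (t * X ω) * Real.sin (t * Y ω)) μ :=
        integrable_of_bdd (((hsinm.comp hX).mul (hsinm.comp hY)).aestronglyMeasurable)
          (C := 1) (fun x => by
            rw [abs_mul]
            exact mul_le_one₀ (Real.abs_sin_le_one _) (abs_nonneg _) (Real.abs_sin_le_one _))
      rw [integral_add hi1 hi2]
      have e1 := hindc.integral_fun_mul_eq_mul_integral hicX.aestronglyMeasurable hicY.aestronglyMeasurable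
      have e2 := hinds.integral_fun_mul_eq_mul_integral hisX.aestronglyMeasurable hisY.aestronglyMeasurable
      rw [← e1, ← e2]
    have hXY : ∀ g : ℝ → ℝ, Measurable g →
        ∫ ω, g (X ω) ∂μ = ∫ ω, g (Y ω) ∂μ := by
      intro g hg
      rw [← integral_map hX.aemeasurable hg.aestronglyMeasurable,
        ← integral_map hY.aemeasurable hg.aestronglyMeasurable, hXd, hYd]
    rw [h0, h2, hXY _ hcosm, hXY _ hsinm]
    nlinarith [mul_self_nonneg (∫ ω, Real.cos (t * Y ω) ∂μ),
      mul_self_nonneg (∫ ω, Real.sin (t * Y ω) ∂μ)]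
  have hid : ∫ z, Real.cos (t * z) ∂ρ
      = Real.cos t + t * ∫ s in Set.Ioc (-1:ℝ) 1, Real.sin (t * s) * F s := by
    set ν : Measure ℝ := volume.restrict (Set.Ioc (-1:ℝ) 1) with hνdef
    haveI : IsFiniteMeasure ν := by
      constructor
      rw [hνdef, Measure.restrict_apply_univ]
      exact measure_Ioc_lt_top
    set f : ℝ → ℝ → ℝ := fun z s => if z ≤ s then Real.sin (t * s) else 0 with hfdef
    have hfm : Measurable (Function.uncurry f) := by
      apply Measurable.ite (measurableSet_le measurable_fst measurable_snd)
      · exact Real.continuous_sin.measurable.comp (measurable_const.mul measurable_snd)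
      · exact measurable_const
    have hfint : Integrable (Function.uncurry f) (ρ.prod ν) := by
      apply integrable_of_bdd hfm.aestronglyMeasurable (C := 1)
      rintro ⟨z, s⟩
      rw [Function.uncurry, hfdef]
      dsimp only
      split
      · exact Real.abs_sin_le_one _
      · norm_num
    have hA : ∀ z ∈ Set.Icc (-1:ℝ) 1,
        Real.cos (t * z) = Real.cos t + t * ∫ s, f z s ∂ν := by
      intro z hz
      have h1 : ∫ s, f z s ∂ν = ∫ s in Set.Ioc z 1, Real.sin (t * s) := by
        have hfi : ∀ s, f z s = (Set.Ici z).indicator (fun s => Real.sin (t * s)) s := by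
          intro s
          rw [hfdef]
          simp [Set.indicator_apply, Set.mem_Ici]
        simp_rw [hfi]
        rw [hνdef, integral_indicator measurableSet_Ici,
          Measure.restrict_restrict measurableSet_Ici]
        apply setIntegral_congr_set
        rw [MeasureTheory.ae_eq_set]
        constructor
        · refine measure_mono_null (t := {z}) (fun s hs => ?_) volume_singleton
          obtain ⟨⟨h1, ⟨h2, h3⟩⟩, h4⟩ := hs
          simp only [Set.mem_Ioc, not_and, not_le] at h4
          have hns : ¬ z < s := fun hlt => absurd h3 (not_le.mpr (h4 hlt))
          show s = z
          exact le_antisymm (not_lt.mp hns) h1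
        · refine measure_mono_null (t := (∅ : Set ℝ)) (fun s hs => ?_) measure_empty
          obtain ⟨⟨h1, h2⟩, h3⟩ := hs
          exact absurd ⟨h1.le, ⟨lt_of_le_of_lt hz.1 h1, h2⟩⟩ h3
      have h2 : ∫ s in Set.Ioc z 1, Real.sin (t * s)
          = (Real.cos (t * z) - Real.cos t) / t := by
        rw [← intervalIntegral.integral_of_le hz.2]
        have : ∀ s, Real.sin (t * s) = Real.sin (t * s) * (0 * s + 1) := by
          intro s; ring
        rw [intervalIntegral.integral_congr (g := fun s => Real.sin (t * s) * (0 * s + 1))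
          (fun s _ => this s)]
        rw [integral_sin_linear htne 0 1 z 1]
        simp only [psi]
        field_simp
        ring
      rw [h1, h2]
      field_simp
      ring
    have hB : ∀ s : ℝ, ∫ z, f z s ∂ρ = Real.sin (t * s) * F s := by
      intro s
      have : ∀ z, f z s = (Set.Iic s).indicator (fun _ => Real.sin (t * s)) z := by
        intro z
        rw [hfdef]
        simp [Set.indicator_apply, Set.mem_Iic]
      simp_rw [this]
      rw [integral_indicator_const _ measurableSet_Iic]
      rw [smul_eq_mul, hFdef]
      simp only [measureReal_def]
      ring
    have hswap : ∫ z, (∫ s, f z s ∂ν) ∂ρ = ∫ s, (∫ z, f z s ∂ρ) ∂ν :=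
      integral_integral_swap hfint
    have hintleft : Integrable (fun z => ∫ s, f z s ∂ν) ρ := hfint.integral_prod_left
    calc ∫ z, Real.cos (t * z) ∂ρ
        = ∫ z, (Real.cos t + t * ∫ s, f z s ∂ν) ∂ρ :=
          integral_congr_ae (hsupp.mono fun z hz => hA z hz)
      _ = Real.cos t + t * ∫ z, (∫ s, f z s ∂ν) ∂ρ := by
          rw [integral_add (integrable_const _) (hintleft.const_mul t),
            integral_const, integral_const_mul]
          simp
      _ = Real.cos t + t * ∫ s, (∫ z, f z s ∂ρ) ∂ν := by rw [hswap]
      _ = Real.cos t + t * ∫ s, Real.sin (t * s) * F s ∂ν := by simp_rw [hB]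
  have hbound : ∫ s in Set.Ioc (-1:ℝ) 1, Real.sin (t * s) * F s
      ≤ (2 * α * Real.sin t / t + 6 * α - 3 - Real.cos t) / t := by
    have hsinm : Measurable fun x : ℝ => Real.sin (t * x) :=
      Real.continuous_sin.measurable.comp (measurable_const.mul measurable_id)
    set p : ℝ := π / t with hpdef
    have hp0 : 0 < p := by positivity
    have hp1 : p < 1 := by rw [hpdef, div_lt_one ht0]; exact hπt
    have htp : t * p = π := by rw [hpdef, mul_comm, div_mul_cancel₀ _ htne]
    have htpn : t * (-p) = -π := by rw [hpdef, mul_neg, mul_comm, div_mul_cancel₀ _ htne]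
    have hintg : ∀ a b : ℝ, IntervalIntegrable (fun s => Real.sin (t * s) * F s) volume a b := by
      intro a b
      apply my_intervalIntegrable (hsinm.mul hFmeas) (C := 1)
      intro x
      rw [Pi.mul_apply, abs_mul]
      refine mul_le_one₀ (Real.abs_sin_le_one _) (abs_nonneg _) ?_
      rw [abs_of_nonneg (hF01 x).1]
      exact (hF01 x).2
    have hcont : ∀ c d : ℝ, Continuous fun s : ℝ => Real.sin (t * s) * (c * s + d) := by
      intro c d
      exact (Real.continuous_sin.comp (continuous_const.mul continuous_id)).mul
        ((continuous_const.mul continuous_id).add continuous_const)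
    -- sign facts
    have hsign1 : ∀ s ∈ Set.Icc (-1:ℝ) (-p), 0 ≤ Real.sin (t * s) := by
      intro s hs
      have h1 : t * s ≤ -π := by
        have := mul_le_mul_of_nonneg_left hs.2 ht0.le
        rwa [htpn] at this
      have h2 : -(2 * π) ≤ t * s := by nlinarith [hs.1]
      have h3 := sin_nonpos_pi_two_pi (by linarith : π ≤ -(t * s))
        (by linarith : -(t * s) ≤ 2 * π)
      rw [Real.sin_neg] at h3
      linarith
    have hsign2 : ∀ s ∈ Set.Icc (-p) (0:ℝ), Real.sin (t * s) ≤ 0 := by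
      intro s hs
      have h1 : -π ≤ t * s := by
        have := mul_le_mul_of_nonneg_left hs.1 ht0.le
        rwa [htpn] at this
      have h2 : t * s ≤ 0 := by nlinarith [hs.2]
      have h3 := Real.sin_nonneg_of_nonneg_of_le_pi (by linarith : (0:ℝ) ≤ -(t * s))
        (by linarith : -(t * s) ≤ π)
      rw [Real.sin_neg] at h3
      linarith
    have hsign3 : ∀ s ∈ Set.Icc (0:ℝ) p, 0 ≤ Real.sin (t * s) := by
      intro s hs
      have h1 : t * s ≤ π := by
        have := mul_le_mul_of_nonneg_left hs.2 ht0.le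
        rwa [htp] at this
      exact Real.sin_nonneg_of_nonneg_of_le_pi (by nlinarith [hs.1]) h1
    have hsign4 : ∀ s ∈ Set.Icc p (1:ℝ), Real.sin (t * s) ≤ 0 := by
      intro s hs
      have h1 : π ≤ t * s := by
        have := mul_le_mul_of_nonneg_left hs.1 ht0.le
        rwa [htp] at this
      exact sin_nonpos_pi_two_pi h1 (by nlinarith [hs.2])
    -- piece bounds
    have hb1 : ∫ s in (-1:ℝ)..(-p), Real.sin (t * s) * F s
        ≤ psi t α α (-p) - psi t α α (-1) := by
      rw [← integral_sin_linear htne α α (-1) (-p)]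
      apply intervalIntegral.integral_mono_on (by linarith) (hintg _ _)
        ((hcont α α).intervalIntegrable _ _)
      intro s hs
      calc Real.sin (t * s) * F s
          ≤ Real.sin (t * s) * (α * (s + 1)) :=
            mul_le_mul_of_nonneg_left (hF_le s ⟨hs.1, by nlinarith [hs.2]⟩) (hsign1 s hs)
        _ = Real.sin (t * s) * (α * s + α) := by ring
    have hb2 : ∫ s in (-p:ℝ)..0, Real.sin (t * s) * F s
        ≤ psi t α (1 - α) 0 - psi t α (1 - α) (-p) := by
      rw [← integral_sin_linear htne α (1 - α) (-p) 0]
      apply intervalIntegral.integral_mono_on (by linarith) (hintg _ _)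
        ((hcont α (1 - α)).intervalIntegrable _ _)
      intro s hs
      calc Real.sin (t * s) * F s
          ≤ Real.sin (t * s) * (1 - α * (1 - s)) :=
            mul_le_mul_of_nonpos_left
              (hF_ge s ⟨by linarith [hs.1], by linarith [hs.2]⟩) (hsign2 s hs)
        _ = Real.sin (t * s) * (α * s + (1 - α)) := by ring
    have hb3 : ∫ s in (0:ℝ)..p, Real.sin (t * s) * F s
        ≤ psi t α α p - psi t α α 0 := by
      rw [← integral_sin_linear htne α α 0 p]
      apply intervalIntegral.integral_mono_on (by linarith) (hintg _ _)
        ((hcont α α).intervalIntegrable _ _)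
      intro s hs
      calc Real.sin (t * s) * F s
          ≤ Real.sin (t * s) * (α * (s + 1)) :=
            mul_le_mul_of_nonneg_left
              (hF_le s ⟨by linarith [hs.1], by linarith [hs.2]⟩) (hsign3 s hs)
        _ = Real.sin (t * s) * (α * s + α) := by ring
    have hb4 : ∫ s in (p:ℝ)..1, Real.sin (t * s) * F s
        ≤ psi t α (1 - α) 1 - psi t α (1 - α) p := by
      rw [← integral_sin_linear htne α (1 - α) p 1]
      apply intervalIntegral.integral_mono_on (by linarith) (hintg _ _)
        ((hcont α (1 - α)).intervalIntegrable _ _)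
      intro s hs
      calc Real.sin (t * s) * F s
          ≤ Real.sin (t * s) * (1 - α * (1 - s)) :=
            mul_le_mul_of_nonpos_left
              (hF_ge s ⟨by linarith [hs.1], hs.2⟩) (hsign4 s hs)
        _ = Real.sin (t * s) * (α * s + (1 - α)) := by ring
    -- split
    have e1 := intervalIntegral.integral_add_adjacent_intervals
      (hintg (-1) (-p)) (hintg (-p) 0)
    have e2 := intervalIntegral.integral_add_adjacent_intervals
      (hintg (-1) 0) (hintg 0 p)
    have e3 := intervalIntegral.integral_add_adjacent_intervals
      (hintg (-1) p) (hintg p 1)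
    have hsum : psi t α α (-p) - psi t α α (-1) + (psi t α (1 - α) 0 - psi t α (1 - α) (-p))
        + (psi t α α p - psi t α α 0) + (psi t α (1 - α) 1 - psi t α (1 - α) p)
        = (2 * α * Real.sin t / t + 6 * α - 3 - Real.cos t) / t := by
      simp only [psi, htp, htpn, mul_one, mul_zero, mul_neg_one, Real.cos_neg, Real.sin_neg,
        Real.cos_pi, Real.sin_pi, Real.cos_zero, Real.sin_zero]
      field_simp
      ring
    have hIoc : ∫ s in Set.Ioc (-1:ℝ) 1, Real.sin (t * s) * F s
        = ∫ s in (-1:ℝ)..1, Real.sin (t * s) * F s :=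
      (intervalIntegral.integral_of_le (by norm_num)).symm
    rw [hIoc]
    linarith [hb1, hb2, hb3, hb4]
  -- conclude
  have hI := hpos
  rw [hid] at hI
  have h5 : t * ((2 * α * Real.sin t / t + 6 * α - 3 - Real.cos t) / t)
      = 2 * α * Real.sin t / t + 6 * α - 3 - Real.cos t := by
    field_simp
  have h6 : 0 ≤ 2 * α * Real.sin t / t + 6 * α - 3 := by
    nlinarith [mul_le_mul_of_nonneg_left hbound ht0.le]
  have h7 : t * (2 * α * Real.sin t / t) = 2 * α * Real.sin t := by field_simp
  have hmain : 3 * t ≤ α * (6 * t + 2 * Real.sin t) := by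
    nlinarith [mul_le_mul_of_nonneg_left h6 ht0.le]
  have hden : 0 < 6 * t + 2 * Real.sin t := by
    nlinarith [Real.neg_one_le_sin t]
  have heq : 1 / 2 + (-Real.sin t) / (6 * t + 2 * Real.sin t)
      = 3 * t / (6 * t + 2 * Real.sin t) := by
    field_simp
    ring
  rw [heq, div_le_iff₀ hden]
  linarith

/-- Let `D` be a probability distribution supported on `[0,1]`, let `X`
and `Y` be independent samples from `D`, and suppose `α ≥ 1/2` satisfies
`Pr[X - Y ≤ x] ≤ α·(x+1)` for all `x ∈ [-1,1]`. Then for every `t ∈ (π, 2π)`,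
`α ≥ 1/2 + (-sin t)/(6t + 2·sin t)`; in particular `t = 4.5` yields
`α ≥ 1/2 + (-sin 4.5)/(27 + 2·sin 4.5) > 0.539`. -/
theorem stmt_16 {Ω : Type*} [MeasurableSpace Ω] (μ : Measure Ω) [IsProbabilityMeasure μ]
    (D : Measure ℝ) [IsProbabilityMeasure D] (hD01 : D (Set.Icc (0 : ℝ) 1) = 1)
    (X Y : Ω → ℝ) (hX : Measurable X) (hY : Measurable Y)
    (hind : ProbabilityTheory.IndepFun X Y μ)
    (hXd : μ.map X = D) (hYd : μ.map Y = D)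
    (α : ℝ) (hα : 1 / 2 ≤ α)
    (hcdf : ∀ x ∈ Set.Icc (-1 : ℝ) 1,
      (μ {ω | X ω - Y ω ≤ x}).toReal ≤ α * (x + 1)) :
    (∀ t : ℝ, Real.pi < t → t < 2 * Real.pi →
      1 / 2 + (-Real.sin t) / (6 * t + 2 * Real.sin t) ≤ α) ∧
    (1 / 2 + (-Real.sin 4.5) / (27 + 2 * Real.sin 4.5) ≤ α) ∧
    ((0.539 : ℝ) < 1 / 2 + (-Real.sin 4.5) / (27 + 2 * Real.sin 4.5)) := by
  have part1 : ∀ t : ℝ, Real.pi < t → t < 2 * Real.pi →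
      1 / 2 + (-Real.sin t) / (6 * t + 2 * Real.sin t) ≤ α :=
    fun t h1 h2 => key μ D hD01 X Y hX hY hind hXd hYd α hcdf t h1 h2
  have hπlt : π < 4.5 := by nlinarith [Real.pi_lt_d2]
  have h2π : (4.5:ℝ) < 2 * π := by nlinarith [Real.pi_gt_d2]
  have part2 : 1 / 2 + (-Real.sin 4.5) / (27 + 2 * Real.sin 4.5) ≤ α := by
    have h := part1 4.5 hπlt h2π
    have h27 : (6:ℝ) * 4.5 = 27 := by norm_num
    rwa [h27] at h
  refine ⟨part1, part2, ?_⟩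
  -- numeric bound on sin 4.5
  have hid : Real.cos (3 * π / 2 - 4.5) = -Real.sin 4.5 := by
    rw [show 3 * π / 2 - (4.5:ℝ) = π - (4.5 - π / 2) by ring, Real.cos_pi_sub,
      show (4.5:ℝ) - π / 2 = -(π / 2 - 4.5) by ring, Real.cos_neg, Real.cos_pi_div_two_sub]
  have hu0 : 0 < 3 * π / 2 - 4.5 := by nlinarith [Real.pi_gt_d6]
  have hu1 : 3 * π / 2 - 4.5 < 0.21239 := by nlinarith [Real.pi_lt_d6]
  have hcos := Real.one_sub_sq_div_two_le_cos (x := 3 * π / 2 - 4.5)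
  have hc : (0.9774:ℝ) ≤ Real.cos (3 * π / 2 - 4.5) := by nlinarith
  have h1 : Real.sin 4.5 ≤ -0.9774 := by rw [hid] at hc; linarith
  have h2 : (-1:ℝ) ≤ Real.sin 4.5 := Real.neg_one_le_sin _
  have hden : (0:ℝ) < 27 + 2 * Real.sin 4.5 := by nlinarith
  have h3 : (-Real.sin 4.5) / (27 + 2 * Real.sin 4.5) * (27 + 2 * Real.sin 4.5)
      = -Real.sin 4.5 := div_mul_cancel₀ _ (ne_of_gt hden)
  nlinarith [h3, hden, h1]
end

section
/- Let G=(V,A) be a finite directed graph whose vertex set is partitioned into two parts A' and B' such that every edge has one endpoint in A' and one in B' (a bipartite directed graph), with edge costs c_e ≥ 0, let k ≥ 1 be an integer, and let x : A → ℝ be a feasible LP solution, i.e., x_e ≥ 0 for all e and ∑_{e∈P} x_e ≥ 1 for every directed path P with k edges. Define a random labeling ℓ : V → [0,1] as follows: sample y uniformly from [0,1] and an independent fair coin b; if b = heads, set ℓ(v) = 0 for all v ∈ A' and ℓ(v) = y for all v ∈ B'; otherwise set ℓ(v) = y for all v ∈ A' and ℓ(v) = 0 for all v ∈ B'. Then for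 every edge e=(u,v) ∈ A, the random variable ℓ(v) − ℓ(u) is uniformly distributed on [-1,1], and letting S(ℓ) = { e=(u,v) ∈ A : ℓ(v) − ℓ(u) ≤ (k+1)·x_e − 1 }, we have E[∑_{e∈S(ℓ)} c_e] ≤ (1/2)·(k+1)·∑_{e∈A} c_e·x_e, and for every realization of ℓ the graph (V, A \ S(ℓ)) contains no directed path with k edges. -/
open MeasureTheory
open scoped Classical ENNReal

private lemma myprod_smul {α β : Type*} [MeasurableSpace α] [MeasurableSpace β]
    (μ : Measure α) (ν : Measure β) [SigmaFinite μ] [IsFiniteMeasure ν]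
    (c : ℝ≥0∞) (hc : c ≠ ⊤) : μ.prod (c • ν) = c • μ.prod ν := by
  have : IsFiniteMeasure (c • ν) := ν.smul_finite hc
  have : SigmaFinite (c • ν) := inferInstance
  refine Measure.prod_eq ?_
  intro s t hs ht
  simp [Measure.prod_prod, mul_comm, mul_left_comm]

private lemma map_neg_restrict :
    (volume.restrict (Set.Icc (0:ℝ) 1)).map (fun y => -y) = volume.restrict (Set.Icc (-1:ℝ) 0) := by
  ext s hs
  rw [Measure.map_apply measurable_neg hs, Measure.restrict_apply (measurable_neg hs),
    Measure.restrict_apply hs]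
  have h1 : (fun y : ℝ => -y) ⁻¹' s ∩ Set.Icc 0 1 = (fun y : ℝ => -y) ⁻¹' (s ∩ Set.Icc (-1) 0) := by
    rw [Set.preimage_inter]
    congr 1
    simp [Set.neg_preimage, Set.neg_Icc]
  rw [h1]
  exact Measure.measure_preimage_neg volume _

private lemma half_sum :
    (2⁻¹ : ℝ≥0∞) • volume.restrict (Set.Icc (0:ℝ) 1)
      + (2⁻¹ : ℝ≥0∞) • volume.restrict (Set.Icc (-1:ℝ) 0)
      = (2⁻¹ : ℝ≥0∞) • volume.restrict (Set.Icc (-1:ℝ) 1) := by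
  have h0 : volume.restrict (Set.Icc (-1:ℝ) 0) = volume.restrict (Set.Ico (-1:ℝ) 0) :=
    (Measure.restrict_congr_set Ico_ae_eq_Icc).symm
  have h1 : Set.Ico (-1:ℝ) 0 ∪ Set.Icc (0:ℝ) 1 = Set.Icc (-1:ℝ) 1 :=
    Set.Ico_union_Icc_eq_Icc (by norm_num) (by norm_num)
  have h2 : volume.restrict (Set.Icc (-1:ℝ) 1)
      = volume.restrict (Set.Ico (-1:ℝ) 0) + volume.restrict (Set.Icc (0:ℝ) 1) := by
    rw [← h1, Measure.restrict_union _ measurableSet_Icc]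
    exact Set.disjoint_left.mpr fun a ⟨_, ha⟩ ⟨ha', _⟩ => absurd ha (not_lt.mpr ha')
  rw [h0, h2, smul_add, add_comm]

private lemma map_signed (ε : Bool) :
    (((volume.restrict (Set.Icc (0:ℝ) 1)).prod
        ((2⁻¹ : ℝ≥0∞) • Measure.dirac true + (2⁻¹ : ℝ≥0∞) • Measure.dirac false)).map
      (fun p : ℝ × Bool => if p.2 = ε then p.1 else -p.1))
    = (2⁻¹ : ℝ≥0∞) • volume.restrict (Set.Icc (-1:ℝ) 1) := by
  set μ : Measure ℝ := volume.restrict (Set.Icc (0:ℝ) 1) with hμ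
  have hmeas : Measurable (fun p : ℝ × Bool => if p.2 = ε then p.1 else -p.1) := by
    refine Measurable.ite ?_ measurable_fst measurable_fst.neg
    exact (measurable_snd (MeasurableSet.singleton ε))
  have hfin : IsFiniteMeasure ((2⁻¹ : ℝ≥0∞) • (Measure.dirac true : Measure Bool)) :=
    Measure.smul_finite _ (by norm_num)
  have hfin' : IsFiniteMeasure ((2⁻¹ : ℝ≥0∞) • (Measure.dirac false : Measure Bool)) :=
    Measure.smul_finite _ (by norm_num)
  rw [Measure.prod_add, myprod_smul _ _ _ (by norm_num), myprod_smul _ _ _ (by norm_num),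
    Measure.prod_dirac, Measure.prod_dirac,
    Measure.map_add _ _ hmeas, Measure.map_smul, Measure.map_smul,
    Measure.map_map hmeas measurable_prodMk_right,
    Measure.map_map hmeas measurable_prodMk_right]
  cases ε
  · rw [show ((fun p : ℝ × Bool => if p.2 = false then p.1 else -p.1) ∘ (fun x : ℝ => (x, true)))
        = fun y : ℝ => -y from funext fun y => by simp,
      show ((fun p : ℝ × Bool => if p.2 = false then p.1 else -p.1) ∘ (fun x : ℝ => (x, false)))
        = id from funext fun y => by simp,
      Measure.map_id, map_neg_restrict, add_comm]
    exact half_sum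
  · rw [show ((fun p : ℝ × Bool => if p.2 = true then p.1 else -p.1) ∘ (fun x : ℝ => (x, true)))
        = id from funext fun y => by simp,
      show ((fun p : ℝ × Bool => if p.2 = true then p.1 else -p.1) ∘ (fun x : ℝ => (x, false)))
        = fun y : ℝ => -y from funext fun y => by simp,
      Measure.map_id, map_neg_restrict]
    exact half_sum

private lemma meas_signed (ε : Bool) :
    Measurable (fun p : ℝ × Bool => if p.2 = ε then p.1 else -p.1) := by
  refine Measurable.ite ?_ measurable_fst measurable_fst.neg
  exact measurable_snd (MeasurableSet.singleton ε)

/-- Let `(V, A)` be a finite bipartite directed graph with bipartition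
`(A', B')` (every edge has one endpoint in `A'` and one outside `A'`), nonnegative edge
costs `c`, `k ≥ 1`, and a feasible LP solution `x`. Sample `y` uniformly from `[0,1]` and
an independent fair coin `b`, and define the labeling `L (y,b)` that assigns `0` to one
side and `y` to the other according to `b`. Then for every edge `e = (u,v) ∈ A` the
random variable `L (y,b) v - L (y,b) u` is uniformly distributed on `[-1,1]`; the expected
cost of the deleted set `S(ℓ) = {e = (u,v) ∈ A : ℓ v - ℓ u ≤ (k+1)·x e - 1}` is at most
`(1/2)·(k+1)·∑_{e ∈ A} c e · x e`; and for every realization of the labeling the remaining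
graph has no directed path with `k` edges. -/
theorem stmt_17 {V : Type*} [Fintype V] (A : Finset (V × V)) (A' : Set V)
    (hbip : ∀ e ∈ A, (e.1 ∈ A' ∧ e.2 ∉ A') ∨ (e.1 ∉ A' ∧ e.2 ∈ A'))
    (c : V × V → ℝ) (hc : ∀ e ∈ A, 0 ≤ c e)
    (k : ℕ) (hk : 1 ≤ k) (x : V × V → ℝ)
    (hx_nonneg : ∀ e ∈ A, 0 ≤ x e)
    (hx_path : ∀ p : Fin (k + 1) → V,
      (∀ i : Fin k, (p i.castSucc, p i.succ) ∈ A) →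
      1 ≤ ∑ i : Fin k, x (p i.castSucc, p i.succ))
    (L : ℝ × Bool → V → ℝ)
    (hL : ∀ (y : ℝ) (b : Bool) (v : V),
      L (y, b) v = if v ∈ A' then (if b then 0 else y) else (if b then y else 0))
    (P : Measure (ℝ × Bool))
    (hP : P = (volume.restrict (Set.Icc (0 : ℝ) 1)).prod
      ((2⁻¹ : ℝ≥0∞) • Measure.dirac true + (2⁻¹ : ℝ≥0∞) • Measure.dirac false)) :
    (∀ e ∈ A, P.map (fun p => L p e.2 - L p e.1)
        = (2⁻¹ : ℝ≥0∞) • volume.restrict (Set.Icc (-1 : ℝ) 1)) ∧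
    (∫ p, (∑ e ∈ A, if L p e.2 - L p e.1 ≤ (k + 1) * x e - 1 then c e else 0) ∂P
      ≤ 1 / 2 * (k + 1) * ∑ e ∈ A, c e * x e) ∧
    (∀ y ∈ Set.Icc (0 : ℝ) 1, ∀ b : Bool,
      ¬ ∃ p : Fin (k + 1) → V, ∀ i : Fin k,
          (p i.castSucc, p i.succ) ∈ A ∧
          ¬ (L (y, b) (p i.succ) - L (y, b) (p i.castSucc)
              ≤ (k + 1) * x (p i.castSucc, p i.succ) - 1)) := by
  subst hP
  have hfun : ∀ e ∈ A, ∃ ε : Bool, (fun p : ℝ × Bool => L p e.2 - L p e.1)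
      = fun p : ℝ × Bool => if p.2 = ε then p.1 else -p.1 := by
    intro e he
    rcases hbip e he with ⟨h1, h2⟩ | ⟨h1, h2⟩
    · exact ⟨true, funext fun p => by
        obtain ⟨y, b⟩ := p
        rw [hL, hL]
        cases b <;> simp [h1, h2]⟩
    · exact ⟨false, funext fun p => by
        obtain ⟨y, b⟩ := p
        rw [hL, hL]
        cases b <;> simp [h1, h2]⟩
  have part1 : ∀ e ∈ A,
      ((volume.restrict (Set.Icc (0 : ℝ) 1)).prod
        ((2⁻¹ : ℝ≥0∞) • Measure.dirac true + (2⁻¹ : ℝ≥0∞) • Measure.dirac false)).map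
        (fun p => L p e.2 - L p e.1)
      = (2⁻¹ : ℝ≥0∞) • volume.restrict (Set.Icc (-1 : ℝ) 1) := by
    intro e he
    obtain ⟨ε, hε⟩ := hfun e he
    rw [hε]
    exact map_signed ε
  refine ⟨part1, ?_, ?_⟩
  · -- part 2
    set P : Measure (ℝ × Bool) := (volume.restrict (Set.Icc (0 : ℝ) 1)).prod
      ((2⁻¹ : ℝ≥0∞) • Measure.dirac true + (2⁻¹ : ℝ≥0∞) • Measure.dirac false) with hPdef
    have hSmeas : ∀ e ∈ A,
        MeasurableSet {p : ℝ × Bool | L p e.2 - L p e.1 ≤ (k + 1) * x e - 1} := by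
      intro e he
      obtain ⟨ε, hε⟩ := hfun e he
      show MeasurableSet ((fun p : ℝ × Bool => L p e.2 - L p e.1) ⁻¹' Set.Iic ((k + 1) * x e - 1))
      rw [hε]
      exact meas_signed ε measurableSet_Iic
    have hPS : ∀ e ∈ A, P {p : ℝ × Bool | L p e.2 - L p e.1 ≤ (k + 1) * x e - 1}
        ≤ 2⁻¹ * ENNReal.ofReal ((k + 1) * x e) := by
      intro e he
      obtain ⟨ε, hε⟩ := hfun e he
      have hm : Measurable (fun p : ℝ × Bool => L p e.2 - L p e.1) := hε ▸ meas_signed ε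
      have : {p : ℝ × Bool | L p e.2 - L p e.1 ≤ (k + 1) * x e - 1}
          = (fun p : ℝ × Bool => L p e.2 - L p e.1) ⁻¹' Set.Iic ((k + 1) * x e - 1) := rfl
      rw [this, ← Measure.map_apply hm measurableSet_Iic, part1 e he,
        Measure.smul_apply, Measure.restrict_apply measurableSet_Iic, smul_eq_mul]
      refine mul_le_mul_right ?_ _
      calc volume (Set.Iic ((k + 1) * x e - 1) ∩ Set.Icc (-1 : ℝ) 1)
          ≤ volume (Set.Icc (-1 : ℝ) ((k + 1) * x e - 1)) :=
            measure_mono fun z ⟨hz1, hz2, _⟩ => ⟨hz2, hz1⟩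
        _ = ENNReal.ofReal ((k + 1) * x e) := by rw [Real.volume_Icc]; ring_nf
    have hμp : IsProbabilityMeasure (volume.restrict (Set.Icc (0 : ℝ) 1)) :=
      ⟨by simp [Real.volume_Icc]⟩
    have hνp : IsProbabilityMeasure
        ((2⁻¹ : ℝ≥0∞) • Measure.dirac true + (2⁻¹ : ℝ≥0∞) • Measure.dirac false :
          Measure Bool) := by
      constructor
      simp [Measure.dirac_apply]
      exact ENNReal.inv_two_add_inv_two
    have hPp : IsProbabilityMeasure P := by rw [hPdef]; infer_instance
    have hint : ∀ e ∈ A, Integrable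
        (fun p : ℝ × Bool => if L p e.2 - L p e.1 ≤ (k + 1) * x e - 1 then c e else 0) P := by
      intro e he
      have : (fun p : ℝ × Bool => if L p e.2 - L p e.1 ≤ (k + 1) * x e - 1 then c e else 0)
          = Set.indicator {p : ℝ × Bool | L p e.2 - L p e.1 ≤ (k + 1) * x e - 1}
              (fun _ => c e) := by
        funext p
        simp [Set.indicator_apply, Set.mem_setOf_eq]
      rw [this]
      exact (integrable_const (c e)).indicator (hSmeas e he)
    rw [integral_finset_sum A hint]
    have hterm : ∀ e ∈ A,
        (∫ p, (if L p e.2 - L p e.1 ≤ (k + 1) * x e - 1 then c e else 0) ∂P)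
          ≤ 1 / 2 * (k + 1) * (c e * x e) := by
      intro e he
      have hind : (fun p : ℝ × Bool => if L p e.2 - L p e.1 ≤ (k + 1) * x e - 1 then c e else 0)
          = Set.indicator {p : ℝ × Bool | L p e.2 - L p e.1 ≤ (k + 1) * x e - 1}
              (fun _ => c e) := by
        funext p
        simp [Set.indicator_apply, Set.mem_setOf_eq]
      rw [hind, integral_indicator_const (c e) (hSmeas e he), smul_eq_mul]
      have hb := hPS e he
      have hfin : (2⁻¹ * ENNReal.ofReal ((k + 1) * x e)) ≠ ⊤ := by
        exact ENNReal.mul_ne_top (by norm_num) ENNReal.ofReal_ne_top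
      have htr : (P {p : ℝ × Bool | L p e.2 - L p e.1 ≤ (k + 1) * x e - 1}).toReal
          ≤ (2⁻¹ * ENNReal.ofReal ((k + 1) * x e)).toReal := ENNReal.toReal_mono hfin hb
      have hxe : (0 : ℝ) ≤ (k + 1) * x e := by
        have := hx_nonneg e he
        positivity
      have htr2 : (2⁻¹ * ENNReal.ofReal ((k + 1) * x e)).toReal = 1 / 2 * ((k + 1) * x e) := by
        rw [ENNReal.toReal_mul, ENNReal.toReal_ofReal hxe]
        norm_num
      calc (P {p : ℝ × Bool | L p e.2 - L p e.1 ≤ (k + 1) * x e - 1}).toReal * c e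
          ≤ (1 / 2 * ((k + 1) * x e)) * c e := by
            refine mul_le_mul_of_nonneg_right ?_ (hc e he)
            rw [← htr2]; exact htr
        _ = 1 / 2 * (k + 1) * (c e * x e) := by ring
    calc ∑ e ∈ A, ∫ p, (if L p e.2 - L p e.1 ≤ (k + 1) * x e - 1 then c e else 0) ∂P
        ≤ ∑ e ∈ A, 1 / 2 * (k + 1) * (c e * x e) := Finset.sum_le_sum hterm
      _ = 1 / 2 * (k + 1) * ∑ e ∈ A, c e * x e := by rw [Finset.mul_sum]
  · -- part 3
    rintro y hy b ⟨p, hp⟩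
    have hA : ∀ i : Fin k, (p i.castSucc, p i.succ) ∈ A := fun i => (hp i).1
    have hsum := hx_path p hA
    have hgt : ∀ i : Fin k, (k + 1 : ℝ) * x (p i.castSucc, p i.succ) - 1
        < L (y, b) (p i.succ) - L (y, b) (p i.castSucc) := fun i => not_le.mp (hp i).2
    have hne : Nonempty (Fin k) := ⟨⟨0, hk⟩⟩
    have hlt : ∑ i : Fin k, ((k + 1 : ℝ) * x (p i.castSucc, p i.succ) - 1)
        < ∑ i : Fin k, (L (y, b) (p i.succ) - L (y, b) (p i.castSucc)) :=
      Finset.sum_lt_sum_of_nonempty Finset.univ_nonempty (fun i _ => hgt i)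
    set g : ℕ → ℝ := fun n => L (y, b) (p ⟨min n k, Nat.lt_succ_of_le (min_le_right n k)⟩)
      with hg
    have htel : ∑ i : Fin k, (L (y, b) (p i.succ) - L (y, b) (p i.castSucc)) = g k - g 0 := by
      rw [← Finset.sum_range_sub g k, ← Fin.sum_univ_eq_sum_range (fun i => g (i + 1) - g i) k]
      refine Finset.sum_congr rfl fun i _ => ?_
      have h1 : g (↑i + 1) = L (y, b) (p i.succ) := by
        show L (y, b) (p ⟨min (↑i + 1) k, _⟩) = L (y, b) (p i.succ)
        congr 1
        exact congrArg p (Fin.ext (by simp [Nat.succ_le_of_lt i.isLt]))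
      have h0 : g ↑i = L (y, b) (p i.castSucc) := by
        show L (y, b) (p ⟨min ↑i k, _⟩) = L (y, b) (p i.castSucc)
        congr 1
        exact congrArg p (Fin.ext (by simp [Nat.le_of_lt i.isLt]))
      rw [h1, h0]
    have hLval : ∀ v : V, 0 ≤ L (y, b) v ∧ L (y, b) v ≤ 1 := by
      intro v
      obtain ⟨hy0, hy1⟩ := hy
      rw [hL]
      constructor <;> [skip; skip] <;> split <;> cases b <;> simp_all
    have hub : g k - g 0 ≤ 1 := by
      have h1 := (hLval (p ⟨min k k, Nat.lt_succ_of_le (min_le_right k k)⟩)).2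
      have h2 := (hLval (p ⟨min 0 k, Nat.lt_succ_of_le (min_le_right 0 k)⟩)).1
      simp only [hg]
      linarith
    have hlhs : ∑ i : Fin k, ((k + 1 : ℝ) * x (p i.castSucc, p i.succ) - 1)
        = (k + 1 : ℝ) * (∑ i : Fin k, x (p i.castSucc, p i.succ)) - k := by
      rw [Finset.sum_sub_distrib, ← Finset.mul_sum, Finset.sum_const, Finset.card_univ,
        Fintype.card_fin, nsmul_eq_mul, mul_one]
    have hk1 : (1 : ℝ) ≤ (k + 1 : ℝ) * (∑ i : Fin k, x (p i.castSucc, p i.succ)) - k := by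
      have h := mul_le_mul_of_nonneg_left hsum (by positivity : (0 : ℝ) ≤ (k + 1 : ℝ))
      linarith
    rw [htel] at hlt
    rw [hlhs] at hlt
    linarith
end
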